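/- Main lemma: Let n = p + q, Σ a standard tableau with n cells, A = st(Σ|{1,...,p}) and B = st(Σ|{p+1,...,n}). Then for standard tableaux U with p cells and V with q cells: Σ ≤ V △ U in the Taskin weak order if and only if A ≤ U and B ≤ V. -/

import Mathlib

/-- Standardization (0-based): replace each letter by its rank among the letters of `w`. -/
def stW (w : List ℕ) : List ℕ := w.map (fun x => (w.filter (· < x)).length)

/-- `w` is the one-line word of a permutation of `{0, …, n-1}` where `n = w.length`. -/
def IsPermWord (w : List ℕ) : Prop := w.Perm (List.range w.length)

/-- The inversion set of a word: pairs `(j, i)` with `j > i` and `j` to the left of `i`. -/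
def invSet (w : List ℕ) : Set (ℕ × ℕ) :=
  {p | p.2 < p.1 ∧ ∃ k l : ℕ, k < l ∧ w[k]? = some p.1 ∧ w[l]? = some p.2}

/-- The right weak order: inclusion of inversion sets. -/
def weakLe (u v : List ℕ) : Prop := invSet u ⊆ invSet v

/-- Left shifted concatenation `v △ u`: the word `v̄ u`, `v̄` being `v` shifted by `|u|`. -/
def triangle (v u : List ℕ) : List ℕ := v.map (· + u.length) ++ u

/-- Right shifted concatenation `u □ v`: the word `u v̄`, `v̄` being `v` shifted by `|u|`. -/
def squareC (u v : List ℕ) : List ℕ := u ++ v.map (· + u.length)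

/-- Schensted row insertion: insert `x` into a row, returning the new row and the
bumped entry (if any). -/
def insertRow (x : ℕ) : List ℕ → List ℕ × Option ℕ
  | [] => ([x], none)
  | y :: ys =>
    if x < y then (x :: ys, some y)
    else
      let r := insertRow x ys
      (y :: r.1, r.2)

/-- Schensted insertion of a letter into a tableau (list of rows, bottom row first). -/
def insertTab : List (List ℕ) → ℕ → List (List ℕ)
  | [], x => [[x]]
  | r :: rs, x =>
    match insertRow x r with
    | (r', none) => r' :: rs
    | (r', some y) => r' :: insertTab rs y

/-- The Robinson–Schensted insertion tableau `P(w)` of a word `w`. -/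
def rsP (w : List ℕ) : List (List ℕ) := w.foldl insertTab []

/-- The (row) reading word of a tableau: rows read from the top row down. -/
def rword (t : List (List ℕ)) : List ℕ := t.reverse.flatten

/-- The Taskin weak order on tableaux: the transitive (and reflexive) closure of
the image of the right weak order under Robinson–Schensted insertion. -/
def taskinLe : List (List ℕ) → List (List ℕ) → Prop :=
  Relation.ReflTransGen (fun T T' => ∃ u v : List ℕ,
    IsPermWord u ∧ IsPermWord v ∧ rsP u = T ∧ rsP v = T' ∧ weakLe u v)

/-! §1 Basic insertion lemmas -/

lemma insertRow_nil (x : ℕ) : insertRow x [] = ([x], none) := rfl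

lemma insertRow_cons_lt {x b : ℕ} (B : List ℕ) (h : x < b) :
    insertRow x (b :: B) = (x :: B, some b) := by
  simp [insertRow, h]

lemma insertRow_append {x : ℕ} {A : List ℕ} (B : List ℕ) (h : ∀ a ∈ A, a ≤ x) :
    insertRow x (A ++ B) = (A ++ (insertRow x B).1, (insertRow x B).2) := by
  induction A with
  | nil => simp
  | cons a A ih =>
    have hax : ¬ x < a := not_lt.2 (h a (by simp))
    have h1 : insertRow x (a :: (A ++ B))
        = (a :: (insertRow x (A ++ B)).1, (insertRow x (A ++ B)).2) := by
      simp [insertRow, hax]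
    simp only [List.cons_append, h1, ih (fun a ha => h a (by simp [ha]))]

lemma insertRow_last {x : ℕ} {A : List ℕ} (h : ∀ a ∈ A, a ≤ x) :
    insertRow x A = (A ++ [x], none) := by
  have := insertRow_append (x := x) (A := A) [] h
  simpa [insertRow_nil] using this

lemma insertRow_mid {x b : ℕ} {A : List ℕ} (B : List ℕ) (hA : ∀ a ∈ A, a ≤ x) (hb : x < b) :
    insertRow x (A ++ b :: B) = (A ++ x :: B, some b) := by
  rw [insertRow_append _ hA, insertRow_cons_lt _ hb]

lemma insertTab_cons_none {x : ℕ} {R R' : List ℕ} (rs : List (List ℕ))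
    (h : insertRow x R = (R', none)) : insertTab (R :: rs) x = R' :: rs := by
  simp [insertTab, h]

lemma insertTab_cons_some {x b : ℕ} {R R' : List ℕ} (rs : List (List ℕ))
    (h : insertRow x R = (R', some b)) :
    insertTab (R :: rs) x = R' :: insertTab rs b := by
  simp [insertTab, h]

lemma insertTab_nil (x : ℕ) : insertTab [] x = [[x]] := rfl

/-- Split a sorted list at a pivot. -/
lemma sorted_split (x : ℕ) {R : List ℕ} (hR : R.Pairwise (· < ·)) :
    ∃ A B, R = A ++ B ∧ (∀ a ∈ A, a ≤ x) ∧ (∀ b ∈ B, x < b) := by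
  induction R with
  | nil => exact ⟨[], [], rfl, by simp, by simp⟩
  | cons r R ih =>
    rw [List.pairwise_cons] at hR
    rcases le_or_gt r x with h | h
    · obtain ⟨A, B, hAB, hA, hB⟩ := ih hR.2
      refine ⟨r :: A, B, by simp [hAB], ?_, hB⟩
      intro a ha
      rcases List.mem_cons.1 ha with rfl | ha
      · exact h
      · exact hA a ha
    · refine ⟨[], r :: R, rfl, by simp, ?_⟩
      intro b hb
      rcases List.mem_cons.1 hb with rfl | hb
      · exact h
      · exact h.trans (hR.1 b hb)

lemma sorted_append_iff {A B : List ℕ} :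
    (A ++ B).Pairwise (· < ·) ↔ A.Pairwise (· < ·) ∧ B.Pairwise (· < ·) ∧ ∀ a ∈ A, ∀ b ∈ B, a < b := by
  rw [List.pairwise_append]

/-! §2 Tableau invariant -/

def TB (T : List (List ℕ)) : Prop := (∀ r ∈ T, r.Pairwise (· < ·)) ∧ T.flatten.Nodup

lemma insertTab_flatten_perm (T : List (List ℕ)) (hT : ∀ r ∈ T, r.Pairwise (· < ·))
    (x : ℕ) : (insertTab T x).flatten.Perm (x :: T.flatten) := by
  induction T generalizing x with
  | nil => simp [insertTab]
  | cons R rs ih =>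
    obtain ⟨A, B, rfl, hA, hB⟩ := sorted_split x (hT R (by simp))
    cases B with
    | nil =>
      have e : A ++ ([] : List ℕ) = A := by simp
      rw [e] at hT ⊢
      rw [insertTab_cons_none rs (insertRow_last hA)]
      rw [← Multiset.coe_eq_coe]
      simp only [List.flatten_cons, ← Multiset.coe_add, ← Multiset.cons_coe,
        ← Multiset.singleton_add]
      abel
    | cons b B' =>
      rw [insertTab_cons_some rs (insertRow_mid B' hA (hB b (by simp)))]
      rw [← Multiset.coe_eq_coe]
      simp only [List.flatten_cons]
      have hperm := (ih (fun r hr => hT r (by simp [hr])) b)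
      rw [← Multiset.coe_eq_coe] at hperm
      simp only [← Multiset.coe_add, ← Multiset.cons_coe, ← Multiset.singleton_add, hperm]
      abel

lemma insertTab_sorted :
    ∀ (T : List (List ℕ)) (x : ℕ), (∀ r ∈ T, r.Pairwise (· < ·)) → T.flatten.Nodup →
      x ∉ T.flatten → ∀ r ∈ insertTab T x, r.Pairwise (· < ·) := by
  intro T
  induction T with
  | nil =>
    intro x _ _ _ r hr
    simp [insertTab] at hr
    simp [hr]
  | cons R rs ih =>
    intro x hs hnd hx
    obtain ⟨A, B, rfl, hA, hB⟩ := sorted_split x (hs R (by simp))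
    have hAx : ∀ a ∈ A, a < x := by
      intro a ha
      rcases lt_or_eq_of_le (hA a ha) with h | h
      · exact h
      · exact absurd (h ▸ (by simp [ha] : a ∈ ((A ++ B) :: rs).flatten)) hx
    cases B with
    | nil =>
      have e : A ++ ([] : List ℕ) = A := by simp
      rw [e] at hs hnd hx ⊢
      rw [insertTab_cons_none rs (insertRow_last hA)]
      intro r hr
      rcases List.mem_cons.1 hr with rfl | hr
      · rw [sorted_append_iff]
        refine ⟨hs A (by simp), by simp, by simpa using hAx⟩
      · exact hs r (by simp [hr])
    | cons b B' =>
      rw [insertTab_cons_some rs (insertRow_mid B' hA (hB b (by simp)))]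
      intro r hr
      have hsR := hs (A ++ b :: B') (by simp)
      rw [sorted_append_iff] at hsR
      rcases List.mem_cons.1 hr with rfl | hr
      · rw [sorted_append_iff]
        refine ⟨hsR.1, ?_, ?_⟩
        · rw [List.pairwise_cons]
          exact ⟨fun c hc => hB c (by simp [hc]), (List.pairwise_cons.1 hsR.2.1).2⟩
        · intro a ha c hc
          rcases List.mem_cons.1 hc with rfl | hc
          · exact hAx a ha
          · exact hsR.2.2 a ha c (by simp [hc])
      · have hb_not : b ∉ rs.flatten := by
          rw [List.flatten_cons, List.nodup_append'] at hnd
          exact fun hb => hnd.2.2 (by simp) hb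
        have hnd' : rs.flatten.Nodup := by
          rw [List.flatten_cons, List.nodup_append'] at hnd
          exact hnd.2.1
        exact ih b (fun r hr => hs r (by simp [hr])) hnd' hb_not r hr

lemma TB_insertTab {T : List (List ℕ)} (hT : TB T) {x : ℕ} (hx : x ∉ T.flatten) :
    TB (insertTab T x) := by
  obtain ⟨hs, hnd⟩ := hT
  refine ⟨insertTab_sorted T x hs hnd hx, ?_⟩
  have hp := insertTab_flatten_perm T hs x
  exact hp.nodup_iff.2 (by simp [hnd, hx])

/-! §3 rsP basics -/

lemma rsP_append (a b : List ℕ) : rsP (a ++ b) = b.foldl insertTab (rsP a) := by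
  simp [rsP, List.foldl_append]

lemma rsP_snoc (w : List ℕ) (x : ℕ) : rsP (w ++ [x]) = insertTab (rsP w) x := by
  simp [rsP_append, rsP]

lemma rsP_TB {w : List ℕ} (hw : w.Nodup) : TB (rsP w) ∧ (rsP w).flatten.Perm w := by
  induction w using List.reverseRecOn with
  | nil => exact ⟨⟨by simp [rsP], by simp [rsP]⟩, by simp [rsP]⟩
  | append_singleton w x ih =>
    rw [List.nodup_append'] at hw
    obtain ⟨hw1, _, hdisj⟩ := hw
    obtain ⟨hTB, hperm⟩ := ih hw1
    have hx : x ∉ (rsP w).flatten := fun h => hdisj (hperm.subset h) (by simp)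
    constructor
    · rw [rsP_snoc]; exact TB_insertTab hTB hx
    · rw [rsP_snoc]
      refine (insertTab_flatten_perm (rsP w) hTB.1 x).trans ?_
      have : (x :: w).Perm (w ++ [x]) := by
        simpa using (List.perm_append_comm (l₁ := [x]) (l₂ := w))
      exact (hperm.cons x).trans this

lemma rword_perm_flatten (T : List (List ℕ)) : (rword T).Perm T.flatten := by
  unfold rword
  exact (List.reverse_perm T).flatten

lemma rword_rsP_perm {w : List ℕ} (hw : w.Nodup) : (rword (rsP w)).Perm w :=
  (rword_perm_flatten _).trans (rsP_TB hw).2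

/-! §4 Knuth equivalence -/

inductive KStep : List ℕ → List ℕ → Prop
  | k1 (u v : List ℕ) {x y z : ℕ} (h1 : x < y) (h2 : y < z) :
      KStep (u ++ x :: z :: y :: v) (u ++ z :: x :: y :: v)
  | k2 (u v : List ℕ) {x y z : ℕ} (h1 : x < y) (h2 : y < z) :
      KStep (u ++ y :: x :: z :: v) (u ++ y :: z :: x :: v)

def K : List ℕ → List ℕ → Prop := Relation.EqvGen KStep

lemma KStep.perm {a b : List ℕ} (h : KStep a b) : a.Perm b := by
  cases h with
  | k1 u v h1 h2 => exact (List.Perm.append_left u (List.Perm.swap _ _ _))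
  | k2 u v h1 h2 => exact (List.Perm.append_left u ((List.Perm.swap _ _ _).cons _))

lemma K.perm {a b : List ℕ} (h : K a b) : a.Perm b := by
  induction h with
  | rel _ _ h => exact h.perm
  | refl => exact List.Perm.refl _
  | symm _ _ _ ih => exact ih.symm
  | trans _ _ _ _ _ ih1 ih2 => exact ih1.trans ih2

lemma K.refl (a : List ℕ) : K a a := Relation.EqvGen.refl a
lemma K.symm {a b : List ℕ} (h : K a b) : K b a := Relation.EqvGen.symm _ _ h
lemma K.trans {a b c : List ℕ} (h1 : K a b) (h2 : K b c) : K a c :=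
  Relation.EqvGen.trans _ _ _ h1 h2
lemma KStep.toK {a b : List ℕ} (h : KStep a b) : K a b := Relation.EqvGen.rel _ _ h

lemma K.lift {f : List ℕ → List ℕ} (hf : ∀ a b, KStep a b → K (f a) (f b))
    {a b : List ℕ} (h : K a b) : K (f a) (f b) := by
  induction h with
  | rel _ _ h => exact hf _ _ h
  | refl => exact K.refl _
  | symm _ _ _ ih => exact ih.symm
  | trans _ _ _ _ _ ih1 ih2 => exact ih1.trans ih2

lemma K.append_right {a b : List ℕ} (s : List ℕ) (h : K a b) : K (a ++ s) (b ++ s) := by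
  refine K.lift (f := (· ++ s)) ?_ h
  intro a b hab
  cases hab with
  | k1 u v h1 h2 =>
    simpa [List.append_assoc] using (KStep.k1 u (v ++ s) h1 h2).toK
  | k2 u v h1 h2 =>
    simpa [List.append_assoc] using (KStep.k2 u (v ++ s) h1 h2).toK

lemma K.append_left {a b : List ℕ} (s : List ℕ) (h : K a b) : K (s ++ a) (s ++ b) := by
  refine K.lift (f := (s ++ ·)) ?_ h
  intro a b hab
  cases hab with
  | k1 u v h1 h2 =>
    simpa [List.append_assoc] using (KStep.k1 (s ++ u) v h1 h2).toK
  | k2 u v h1 h2 =>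
    simpa [List.append_assoc] using (KStep.k2 (s ++ u) v h1 h2).toK

lemma K.map_shift {a b : List ℕ} (c : ℕ) (h : K a b) :
    K (a.map (· + c)) (b.map (· + c)) := by
  refine K.lift (f := fun w => w.map (· + c)) ?_ h
  intro a b hab
  cases hab with
  | k1 u v h1 h2 =>
    simpa using (KStep.k1 (u.map (· + c)) (v.map (· + c))
      (by omega : _ + c < _ + c) (by omega : _ + c < _ + c)).toK
  | k2 u v h1 h2 =>
    simpa using (KStep.k2 (u.map (· + c)) (v.map (· + c))
      (by omega : _ + c < _ + c) (by omega : _ + c < _ + c)).toK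

lemma K.filter_lt {a b : List ℕ} (p : ℕ) (h : K a b) :
    K (a.filter (· < p)) (b.filter (· < p)) := by
  refine K.lift (f := fun w => w.filter (· < p)) ?_ h
  intro a b hab
  cases hab with
  | k1 u v h1 h2 =>
    rename_i x y z
    simp only [List.filter_append, List.filter_cons]
    by_cases hx : x < p <;> by_cases hy : y < p <;> by_cases hz : z < p <;>
      simp [hx, hy, hz, decide_eq_true_eq] <;>
      first
        | exact K.refl _
        | (exact absurd (h1.trans h2) (by omega))
        | (exact absurd h1 (by omega)) | (exact absurd h2 (by omega))
        | skip
    · -- all three < p : genuine move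
      exact (KStep.k1 (u.filter (· < p)) (v.filter (· < p)) h1 h2).toK
  | k2 u v h1 h2 =>
    rename_i x y z
    simp only [List.filter_append, List.filter_cons]
    by_cases hx : x < p <;> by_cases hy : y < p <;> by_cases hz : z < p <;>
      simp [hx, hy, hz, decide_eq_true_eq] <;>
      first
        | exact K.refl _
        | (exact absurd (h1.trans h2) (by omega))
        | (exact absurd h1 (by omega)) | (exact absurd h2 (by omega))
        | skip
    · exact (KStep.k2 (u.filter (· < p)) (v.filter (· < p)) h1 h2).toK

lemma K.filter_ge {a b : List ℕ} (p : ℕ) (h : K a b) :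
    K (a.filter (fun x => p ≤ x)) (b.filter (fun x => p ≤ x)) := by
  refine K.lift (f := fun w => w.filter (fun x => p ≤ x)) ?_ h
  intro a b hab
  cases hab with
  | k1 u v h1 h2 =>
    rename_i x y z
    simp only [List.filter_append, List.filter_cons]
    by_cases hx : p ≤ x <;> by_cases hy : p ≤ y <;> by_cases hz : p ≤ z <;>
      simp [hx, hy, hz, decide_eq_true_eq] <;>
      first
        | exact K.refl _
        | (exact absurd (h1.trans h2) (by omega))
        | (exact absurd h1 (by omega)) | (exact absurd h2 (by omega))
        | skip
    · exact (KStep.k1 (u.filter (fun x => p ≤ x)) (v.filter (fun x => p ≤ x)) h1 h2).toK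
  | k2 u v h1 h2 =>
    rename_i x y z
    simp only [List.filter_append, List.filter_cons]
    by_cases hx : p ≤ x <;> by_cases hy : p ≤ y <;> by_cases hz : p ≤ z <;>
      simp [hx, hy, hz, decide_eq_true_eq] <;>
      first
        | exact K.refl _
        | (exact absurd (h1.trans h2) (by omega))
        | (exact absurd h1 (by omega)) | (exact absurd h2 (by omega))
        | skip
    · exact (KStep.k2 (u.filter (fun x => p ≤ x)) (v.filter (fun x => p ≤ x)) h1 h2).toK

lemma K.map_sub {a b : List ℕ} (p : ℕ) (h : K a b) (ha : ∀ t ∈ a, p ≤ t) :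
    K (a.map (· - p)) (b.map (· - p)) := by
  have main : ∀ a b, K a b → a.Perm b ∧ ((∀ t ∈ a, p ≤ t) → K (a.map (· - p)) (b.map (· - p))) := by
    intro a b h
    induction h with
    | rel a b h =>
      refine ⟨h.perm, ?_⟩
      intro hge
      cases h with
      | k1 u v h1 h2 =>
        rename_i x y z
        have hx : p ≤ x := hge x (by simp)
        have hy : p ≤ y := hge y (by simp)
        simp only [List.map_append, List.map_cons]
        exact (KStep.k1 (u.map (· - p)) (v.map (· - p))
          (by omega) (by omega)).toK
      | k2 u v h1 h2 =>
        rename_i x y z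
        have hx : p ≤ x := hge x (by simp)
        have hy : p ≤ y := hge y (by simp)
        simp only [List.map_append, List.map_cons]
        exact (KStep.k2 (u.map (· - p)) (v.map (· - p))
          (by omega) (by omega)).toK
    | refl => exact ⟨List.Perm.refl _, fun _ => K.refl _⟩
    | symm a b _ ih =>
      refine ⟨ih.1.symm, fun hge => (ih.2 (fun t ht => hge t (ih.1.subset ht))).symm⟩
    | trans a b c _ _ ih1 ih2 =>
      exact ⟨ih1.1.trans ih2.1,
        fun hge => (ih1.2 hge).trans (ih2.2 (fun t ht => hge t (ih1.1.symm.subset ht)))⟩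
  exact (main a b h).2 ha

/-! §5 L1: w ≡ rword (rsP w) -/

lemma rword_nil : rword [] = [] := rfl

lemma rword_cons (r : List ℕ) (rs : List (List ℕ)) : rword (r :: rs) = rword rs ++ r := by
  simp [rword]

lemma RW1 : ∀ (B' : List ℕ) (e a : ℕ), a < e → (∀ c ∈ B', e < c) → B'.Pairwise (· < ·) →
    K (e :: a :: B') (e :: (B' ++ [a])) := by
  intro B'
  induction B' with
  | nil => intro e a _ _ _; exact K.refl _
  | cons c B'' ih =>
    intro e a hae hgt hs
    have hc : e < c := hgt c (by simp)
    have step1 : K (e :: a :: c :: B'') (e :: c :: a :: B'') := by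
      simpa using (KStep.k2 ([] : List ℕ) B'' hae hc).toK
    refine step1.trans ?_
    have step2 : K (c :: a :: B'') (c :: (B'' ++ [a])) := by
      rw [List.pairwise_cons] at hs
      exact ih c a (hae.trans hc) hs.1 hs.2
    simpa using K.append_left [e] step2

lemma RWmove : ∀ (A : List ℕ) (b a : ℕ) (B' : List ℕ), A.Pairwise (· < ·) →
    (∀ α ∈ A, α < a) → a < b → K (b :: (A ++ a :: B')) (A ++ b :: a :: B') := by
  intro A
  induction A with
  | nil => intro b a B' _ _ _; exact K.refl _
  | cons α A' ih =>
    intro b a B' hs hlt hab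
    rw [List.pairwise_cons] at hs
    have hα : α < a := hlt α (by simp)
    have step1 : K (b :: (α :: A' ++ a :: B')) (α :: (b :: (A' ++ a :: B'))) := by
      cases A' with
      | nil => simpa using ((KStep.k1 ([] : List ℕ) B' hα hab).toK).symm
      | cons c A'' =>
        have h1 : α < c := hs.1 c (by simp)
        have h2 : c < b := (hlt c (by simp)).trans hab
        simpa using ((KStep.k1 ([] : List ℕ) (A'' ++ a :: B') h1 h2).toK).symm
    refine step1.trans ?_
    have step2 := ih b a B' hs.2 (fun β hβ => hlt β (by simp [hβ])) hab
    simpa using K.append_left [α] step2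

lemma rowK {A B' : List ℕ} {a b : ℕ} (hsA : A.Pairwise (· < ·)) (hA : ∀ α ∈ A, α < a)
    (hab : a < b) (hsB : B'.Pairwise (· < ·)) (hB : ∀ c ∈ B', b < c) :
    K (b :: (A ++ a :: B')) ((A ++ b :: B') ++ [a]) := by
  refine (RWmove A b a B' hsA hA hab).trans ?_
  have h1 : K (b :: a :: B') (b :: (B' ++ [a])) := RW1 B' b a hab hB hsB
  have := K.append_left A h1
  simpa using this

lemma rword_insertTab : ∀ (T : List (List ℕ)), TB T → ∀ (x : ℕ), x ∉ T.flatten →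
    K (rword T ++ [x]) (rword (insertTab T x)) := by
  intro T
  induction T with
  | nil => intro _ x _; simp [rword, insertTab]; exact K.refl _
  | cons R rs ih =>
    intro hTB x hx
    obtain ⟨hs, hnd⟩ := hTB
    obtain ⟨A, B, rfl, hA, hB⟩ := sorted_split x (hs R (by simp))
    have hsR := hs (A ++ B) (by simp)
    rw [sorted_append_iff] at hsR
    have hAx : ∀ α ∈ A, α < x := by
      intro α hα
      rcases lt_or_eq_of_le (hA α hα) with h | h
      · exact h
      · exact absurd (h ▸ (by simp [hα] : α ∈ ((A ++ B) :: rs).flatten)) hx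
    cases B with
    | nil =>
      have e : A ++ ([] : List ℕ) = A := by simp
      rw [e] at hs hnd hx ⊢
      rw [insertTab_cons_none rs (insertRow_last hA)]
      rw [rword_cons, rword_cons]
      simpa using K.refl _
    | cons b B' =>
      rw [insertTab_cons_some rs (insertRow_mid B' hA (hB b (by simp)))]
      rw [rword_cons, rword_cons]
      have hTBrs : TB rs := by
        refine ⟨fun r hr => hs r (by simp [hr]), ?_⟩
        rw [List.flatten_cons, List.nodup_append'] at hnd
        exact hnd.2.1
      have hbrs : b ∉ rs.flatten := by
        rw [List.flatten_cons, List.nodup_append'] at hnd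
        exact fun hb => hnd.2.2 (by simp) hb
      have ihb := ih hTBrs b hbrs
      have hrow : K (b :: (A ++ x :: B')) ((A ++ b :: B') ++ [x]) :=
        rowK hsR.1 hAx (hB b (by simp)) (List.pairwise_cons.1 hsR.2.1).2
          (fun c hc => (List.pairwise_cons.1 hsR.2.1).1 c hc)
      have h1 := K.append_left (rword rs) hrow.symm
      have h2 := K.append_right (A ++ x :: B') ihb
      have e1 : rword rs ++ ((A ++ b :: B') ++ [x]) = (rword rs ++ (A ++ b :: B')) ++ [x] := by
        simp
      have e2 : rword rs ++ (b :: (A ++ x :: B')) = (rword rs ++ [b]) ++ (A ++ x :: B') := by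
        simp
      rw [e1, e2] at h1
      exact h1.trans h2

lemma K_rword_rsP {w : List ℕ} (hw : w.Nodup) : K w (rword (rsP w)) := by
  induction w using List.reverseRecOn with
  | nil => exact K.refl _
  | append_singleton w x ih =>
    rw [List.nodup_append'] at hw
    obtain ⟨hw1, _, hdisj⟩ := hw
    have hx : x ∉ (rsP w).flatten := fun h => hdisj ((rsP_TB hw1).2.subset h) (by simp)
    have h1 : K (w ++ [x]) (rword (rsP w) ++ [x]) := K.append_right [x] (ih hw1)
    refine h1.trans ?_
    rw [rsP_snoc]
    exact rword_insertTab (rsP w) (rsP_TB hw1).1 x hx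

/-! §6 L2: Knuth invariance of insertion -/

lemma insertRow_last' {x : ℕ} {R A : List ℕ} (hA : ∀ a ∈ A, a ≤ x) (hR : R = A) :
    insertRow x R = (A ++ [x], none) := by subst hR; exact insertRow_last hA

lemma insertRow_mid' {x b : ℕ} {R A B R' : List ℕ} (hA : ∀ a ∈ A, a ≤ x) (hb : x < b)
    (hR : R = A ++ b :: B) (hR' : R' = A ++ x :: B) : insertRow x R = (R', some b) := by
  subst hR; subst hR'; exact insertRow_mid B hA hb

lemma le_append' {A B : List ℕ} {x : ℕ} (hA : ∀ a ∈ A, a ≤ x) (hB : ∀ a ∈ B, a ≤ x) :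
    ∀ a ∈ A ++ B, a ≤ x := by
  intro a ha; rcases List.mem_append.1 ha with h | h
  · exact hA a h
  · exact hB a h

lemma le_cons' {B : List ℕ} {t x : ℕ} (h1 : t ≤ x) (hB : ∀ a ∈ B, a ≤ x) :
    ∀ a ∈ t :: B, a ≤ x := by
  intro a ha; rcases List.mem_cons.1 ha with rfl | h
  · exact h1
  · exact hB a h

lemma le_nil' {x : ℕ} : ∀ a ∈ ([] : List ℕ), a ≤ x := by simp

lemma L2core : ∀ (T : List (List ℕ)), (∀ r ∈ T, r.Pairwise (· < ·)) → T.flatten.Nodup →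
    ∀ x y z : ℕ, x < y → y < z → x ∉ T.flatten → y ∉ T.flatten → z ∉ T.flatten →
    (insertTab (insertTab (insertTab T x) z) y = insertTab (insertTab (insertTab T z) x) y) ∧
    (insertTab (insertTab (insertTab T y) x) z = insertTab (insertTab (insertTab T y) z) x) := by
  intro T
  induction T with
  | nil =>
    intro _ _ x y z hxy hyz _ _ _
    have hxz := hxy.trans hyz
    constructor
    · have i2 : insertRow z [x] = ([x] ++ [z], none) :=
        insertRow_last' (le_cons' hxz.le le_nil') rfl
      have i3 : insertRow y ([x] ++ [z]) = ([x] ++ [y], some z) :=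
        insertRow_mid' (le_cons' hxy.le le_nil') hyz rfl rfl
      have j2 : insertRow x [z] = ([] ++ x :: [], some z) := insertRow_mid' le_nil' hxz rfl rfl
      have j3 : insertRow y ([] ++ x :: []) = (([] ++ x :: []) ++ [y], none) :=
        insertRow_last' (by simp [hxy.le]) rfl
      show insertTab (insertTab [[x]] z) y = insertTab (insertTab [[z]] x) y
      rw [insertTab_cons_none _ i2, insertTab_cons_some _ i3,
          insertTab_cons_some _ j2, insertTab_cons_none _ j3]
      simp [insertTab]
    · have i2 : insertRow x [y] = ([] ++ x :: [], some y) := insertRow_mid' le_nil' hxy rfl rfl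
      have i3 : insertRow z ([] ++ x :: []) = (([] ++ x :: []) ++ [z], none) :=
        insertRow_last' (by simp [hxz.le]) rfl
      have j2 : insertRow z [y] = ([y] ++ [z], none) :=
        insertRow_last' (le_cons' hyz.le le_nil') rfl
      have j3 : insertRow x ([y] ++ [z]) = ([] ++ x :: [z], some y) :=
        insertRow_mid' le_nil' hxy rfl rfl
      show insertTab (insertTab [[y]] x) z = insertTab (insertTab [[y]] z) x
      rw [insertTab_cons_some _ i2, insertTab_cons_none _ i3,
          insertTab_cons_none _ j2, insertTab_cons_some _ j3]
      simp [insertTab]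
  | cons R rs ih =>
    intro hs hnd x y z hxy hyz hfx hfy hfz
    have hxz := hxy.trans hyz
    have hsR : R.Pairwise (· < ·) := hs R (by simp)
    have hsrs : ∀ r ∈ rs, r.Pairwise (· < ·) := fun r hr => hs r (by simp [hr])
    rw [List.flatten_cons, List.nodup_append'] at hnd
    obtain ⟨hndR, hndrs, hdisj⟩ := hnd
    simp only [List.flatten_cons, List.mem_append] at hfx hfy hfz
    push_neg at hfx hfy hfz
    constructor
    · -- GOAL 1 : orders (x,z,y) vs (z,x,y)
      obtain ⟨A, B, rfl, hA, hB⟩ := sorted_split x hsR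
      have hAy : ∀ a ∈ A, a ≤ y := fun a ha => (hA a ha).trans hxy.le
      have hAz : ∀ a ∈ A, a ≤ z := fun a ha => (hA a ha).trans hxz.le
      cases B with
      | nil =>
        have i1 : insertRow x (A ++ []) = (A ++ [x], none) := insertRow_last' hA (by simp)
        have i2 : insertRow z (A ++ [x]) = ((A ++ [x]) ++ [z], none) :=
          insertRow_last' (le_append' hAz (le_cons' hxz.le le_nil')) rfl
        have i3 : insertRow y ((A ++ [x]) ++ [z]) = ((A ++ [x]) ++ [y], some z) :=
          insertRow_mid' (le_append' hAy (le_cons' hxy.le le_nil')) hyz rfl rfl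
        have j1 : insertRow z (A ++ []) = (A ++ [z], none) := insertRow_last' hAz (by simp)
        have j2 : insertRow x (A ++ [z]) = (A ++ [x], some z) := insertRow_mid' hA hxz rfl rfl
        have j3 : insertRow y (A ++ [x]) = ((A ++ [x]) ++ [y], none) :=
          insertRow_last' (le_append' hAy (le_cons' hxy.le le_nil')) rfl
        rw [insertTab_cons_none rs i1, insertTab_cons_none rs i2, insertTab_cons_some rs i3,
            insertTab_cons_none rs j1, insertTab_cons_some rs j2, insertTab_cons_none _ j3]
      | cons b B₂ =>
        have hxb : x < b := hB b (by simp)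
        have hsB : (b :: B₂).Pairwise (· < ·) := (sorted_append_iff.1 hsR).2.1
        have hbB₂ : ∀ t ∈ B₂, b < t := (List.pairwise_cons.1 hsB).1
        have hsB₂ : B₂.Pairwise (· < ·) := (List.pairwise_cons.1 hsB).2
        have hbz_ne : b ≠ z := fun h => hfz.1 (h ▸ (by simp))
        have hb_rs : b ∉ rs.flatten := fun h => hdisj (by simp) h
        rcases lt_or_gt_of_ne hbz_ne with hbz | hzb
        · -- b < z
          obtain ⟨C, D, rfl, hC, hD⟩ := sorted_split z hsB₂
          have hsC : C.Pairwise (· < ·) := (sorted_append_iff.1 hsB₂).1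
          obtain ⟨C₁, C₂, rfl, hC₁, hC₂⟩ := sorted_split y hsC
          have hC₁z : ∀ t ∈ C₁, t ≤ z := fun t ht => hC t (by simp [ht])
          have hPy : ∀ t ∈ A ++ x :: C₁, t ≤ y := le_append' hAy (le_cons' hxy.le hC₁)
          cases D with
          | nil =>
            cases C₂ with
            | nil =>
              have i1 : insertRow x (A ++ b :: ((C₁ ++ []) ++ [])) =
                  (A ++ x :: ((C₁ ++ []) ++ []), some b) := insertRow_mid' hA hxb rfl rfl
              have i2 : insertRow z (A ++ x :: ((C₁ ++ []) ++ [])) =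
                  ((A ++ x :: C₁) ++ [z], none) :=
                insertRow_last' (le_append' hAz (le_cons' hxz.le hC₁z)) (by simp)
              have i3 : insertRow y ((A ++ x :: C₁) ++ [z]) =
                  ((A ++ x :: C₁) ++ [y], some z) := insertRow_mid' hPy hyz rfl rfl
              have j1 : insertRow z (A ++ b :: ((C₁ ++ []) ++ [])) =
                  ((A ++ b :: C₁) ++ [z], none) :=
                insertRow_last' (le_append' hAz (le_cons' hbz.le hC₁z)) (by simp)
              have j2 : insertRow x ((A ++ b :: C₁) ++ [z]) =
                  (A ++ x :: (C₁ ++ [z]), some b) := insertRow_mid' hA hxb (by simp) rfl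
              have j3 : insertRow y (A ++ x :: (C₁ ++ [z])) =
                  ((A ++ x :: C₁) ++ [y], some z) :=
                insertRow_mid' (B := ([] : List ℕ)) hPy hyz (by simp) rfl
              rw [insertTab_cons_some rs i1, insertTab_cons_none _ i2, insertTab_cons_some _ i3,
                  insertTab_cons_none rs j1, insertTab_cons_some rs j2, insertTab_cons_some _ j3]
            | cons c₂ C₃ =>
              have hCz : ∀ t ∈ C₁ ++ c₂ :: C₃, t ≤ z := hC
              have i1 : insertRow x (A ++ b :: ((C₁ ++ c₂ :: C₃) ++ [])) =
                  (A ++ x :: ((C₁ ++ c₂ :: C₃) ++ []), some b) := insertRow_mid' hA hxb rfl rfl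
              have i2 : insertRow z (A ++ x :: ((C₁ ++ c₂ :: C₃) ++ [])) =
                  ((A ++ x :: (C₁ ++ c₂ :: C₃)) ++ [z], none) :=
                insertRow_last' (le_append' hAz (le_cons' hxz.le hCz)) (by simp)
              have i3 : insertRow y ((A ++ x :: (C₁ ++ c₂ :: C₃)) ++ [z]) =
                  ((A ++ x :: C₁) ++ y :: (C₃ ++ [z]), some c₂) :=
                insertRow_mid' (B := C₃ ++ [z]) hPy (hC₂ c₂ (by simp)) (by simp) (by simp)
              have j1 : insertRow z (A ++ b :: ((C₁ ++ c₂ :: C₃) ++ [])) =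
                  ((A ++ b :: (C₁ ++ c₂ :: C₃)) ++ [z], none) :=
                insertRow_last' (le_append' hAz (le_cons' hbz.le hCz)) (by simp)
              have j2 : insertRow x ((A ++ b :: (C₁ ++ c₂ :: C₃)) ++ [z]) =
                  (A ++ x :: ((C₁ ++ c₂ :: C₃) ++ [z]), some b) :=
                insertRow_mid' hA hxb (by simp) rfl
              have j3 : insertRow y (A ++ x :: ((C₁ ++ c₂ :: C₃) ++ [z])) =
                  ((A ++ x :: C₁) ++ y :: (C₃ ++ [z]), some c₂) :=
                insertRow_mid' (B := C₃ ++ [z]) hPy (hC₂ c₂ (by simp)) (by simp) (by simp)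
              rw [insertTab_cons_some rs i1, insertTab_cons_none _ i2, insertTab_cons_some _ i3,
                  insertTab_cons_none rs j1, insertTab_cons_some rs j2, insertTab_cons_some _ j3]
          | cons d D₂ =>
            have hzd : z < d := hD d (by simp)
            cases C₂ with
            | nil =>
              have i1 : insertRow x (A ++ b :: ((C₁ ++ []) ++ d :: D₂)) =
                  (A ++ x :: ((C₁ ++ []) ++ d :: D₂), some b) := insertRow_mid' hA hxb rfl rfl
              have i2 : insertRow z (A ++ x :: ((C₁ ++ []) ++ d :: D₂)) =
                  ((A ++ x :: C₁) ++ z :: D₂, some d) :=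
                insertRow_mid' (B := D₂) (le_append' hAz (le_cons' hxz.le hC₁z)) hzd
                  (by simp) (by simp)
              have i3 : insertRow y ((A ++ x :: C₁) ++ z :: D₂) =
                  ((A ++ x :: C₁) ++ y :: D₂, some z) := insertRow_mid' hPy hyz rfl rfl
              have j1 : insertRow z (A ++ b :: ((C₁ ++ []) ++ d :: D₂)) =
                  ((A ++ b :: C₁) ++ z :: D₂, some d) :=
                insertRow_mid' (B := D₂) (le_append' hAz (le_cons' hbz.le hC₁z)) hzd
                  (by simp) (by simp)
              have j2 : insertRow x ((A ++ b :: C₁) ++ z :: D₂) =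
                  (A ++ x :: (C₁ ++ z :: D₂), some b) := insertRow_mid' hA hxb (by simp) rfl
              have j3 : insertRow y (A ++ x :: (C₁ ++ z :: D₂)) =
                  ((A ++ x :: C₁) ++ y :: D₂, some z) := insertRow_mid' hPy hyz (by simp) rfl
              rw [insertTab_cons_some rs i1, insertTab_cons_some _ i2, insertTab_cons_some _ i3,
                  insertTab_cons_some rs j1, insertTab_cons_some _ j2, insertTab_cons_some _ j3]
              have hd_rs : d ∉ rs.flatten := fun h => hdisj (by simp) h
              rw [← (ih hsrs hndrs b z d hbz hzd hb_rs hfz.2 hd_rs).1]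
            | cons c₂ C₃ =>
              have hCz : ∀ t ∈ C₁ ++ c₂ :: C₃, t ≤ z := hC
              have i1 : insertRow x (A ++ b :: ((C₁ ++ c₂ :: C₃) ++ d :: D₂)) =
                  (A ++ x :: ((C₁ ++ c₂ :: C₃) ++ d :: D₂), some b) :=
                insertRow_mid' hA hxb rfl rfl
              have i2 : insertRow z (A ++ x :: ((C₁ ++ c₂ :: C₃) ++ d :: D₂)) =
                  ((A ++ x :: (C₁ ++ c₂ :: C₃)) ++ z :: D₂, some d) :=
                insertRow_mid' (le_append' hAz (le_cons' hxz.le hCz)) hzd (by simp) rfl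
              have i3 : insertRow y ((A ++ x :: (C₁ ++ c₂ :: C₃)) ++ z :: D₂) =
                  ((A ++ x :: C₁) ++ y :: (C₃ ++ z :: D₂), some c₂) :=
                insertRow_mid' (B := C₃ ++ z :: D₂) hPy (hC₂ c₂ (by simp)) (by simp) (by simp)
              have j1 : insertRow z (A ++ b :: ((C₁ ++ c₂ :: C₃) ++ d :: D₂)) =
                  ((A ++ b :: (C₁ ++ c₂ :: C₃)) ++ z :: D₂, some d) :=
                insertRow_mid' (le_append' hAz (le_cons' hbz.le hCz)) hzd (by simp) rfl
              have j2 : insertRow x ((A ++ b :: (C₁ ++ c₂ :: C₃)) ++ z :: D₂) =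
                  (A ++ x :: ((C₁ ++ c₂ :: C₃) ++ z :: D₂), some b) :=
                insertRow_mid' hA hxb (by simp) rfl
              have j3 : insertRow y (A ++ x :: ((C₁ ++ c₂ :: C₃) ++ z :: D₂)) =
                  ((A ++ x :: C₁) ++ y :: (C₃ ++ z :: D₂), some c₂) :=
                insertRow_mid' (B := C₃ ++ z :: D₂) hPy (hC₂ c₂ (by simp)) (by simp) (by simp)
              rw [insertTab_cons_some rs i1, insertTab_cons_some _ i2, insertTab_cons_some _ i3,
                  insertTab_cons_some rs j1, insertTab_cons_some _ j2, insertTab_cons_some _ j3]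
              have hd_rs : d ∉ rs.flatten := fun h => hdisj (by simp) h
              have hc₂_rs : c₂ ∉ rs.flatten := fun h => hdisj (by simp) h
              have hbc₂ : b < c₂ := hbB₂ c₂ (by simp)
              have hc₂d : c₂ < d := lt_of_le_of_lt (hC c₂ (by simp)) hzd
              rw [(ih hsrs hndrs b c₂ d hbc₂ hc₂d hb_rs hc₂_rs hd_rs).1]
        · -- z < b
          cases B₂ with
          | nil =>
            have i1 : insertRow x (A ++ b :: []) = (A ++ x :: [], some b) :=
              insertRow_mid' hA hxb rfl rfl
            have i2 : insertRow z (A ++ x :: []) = ((A ++ x :: []) ++ [z], none) :=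
              insertRow_last' (le_append' hAz (le_cons' hxz.le le_nil')) rfl
            have i3 : insertRow y ((A ++ x :: []) ++ [z]) = ((A ++ x :: []) ++ [y], some z) :=
              insertRow_mid' (le_append' hAy (le_cons' hxy.le le_nil')) hyz rfl rfl
            have j1 : insertRow z (A ++ b :: []) = (A ++ z :: [], some b) :=
              insertRow_mid' hAz hzb rfl rfl
            have j2 : insertRow x (A ++ z :: []) = (A ++ x :: [], some z) :=
              insertRow_mid' hA hxz rfl rfl
            have j3 : insertRow y (A ++ x :: []) = ((A ++ x :: []) ++ [y], none) :=
              insertRow_last' (le_append' hAy (le_cons' hxy.le le_nil')) rfl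
            rw [insertTab_cons_some rs i1, insertTab_cons_none _ i2, insertTab_cons_some _ i3,
                insertTab_cons_some rs j1, insertTab_cons_some _ j2, insertTab_cons_none _ j3]
          | cons c B₃ =>
            have hzc : z < c := hzb.trans (hbB₂ c (by simp))
            have hyc : y < c := hyz.trans hzc
            have i1 : insertRow x (A ++ b :: c :: B₃) = (A ++ x :: c :: B₃, some b) :=
              insertRow_mid' hA hxb rfl rfl
            have i2 : insertRow z (A ++ x :: c :: B₃) = ((A ++ x :: []) ++ z :: B₃, some c) :=
              insertRow_mid' (le_append' hAz (le_cons' hxz.le le_nil')) hzc (by simp) rfl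
            have i3 : insertRow y ((A ++ x :: []) ++ z :: B₃) =
                ((A ++ x :: []) ++ y :: B₃, some z) :=
              insertRow_mid' (le_append' hAy (le_cons' hxy.le le_nil')) hyz rfl rfl
            have j1 : insertRow z (A ++ b :: c :: B₃) = (A ++ z :: c :: B₃, some b) :=
              insertRow_mid' hAz hzb rfl rfl
            have j2 : insertRow x (A ++ z :: c :: B₃) = (A ++ x :: c :: B₃, some z) :=
              insertRow_mid' hA hxz rfl rfl
            have j3 : insertRow y (A ++ x :: c :: B₃) = ((A ++ x :: []) ++ y :: B₃, some c) :=
              insertRow_mid' (le_append' hAy (le_cons' hxy.le le_nil')) hyc (by simp) rfl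
            rw [insertTab_cons_some rs i1, insertTab_cons_some _ i2, insertTab_cons_some _ i3,
                insertTab_cons_some rs j1, insertTab_cons_some _ j2, insertTab_cons_some _ j3]
            have hc_rs : c ∉ rs.flatten := fun h => hdisj (by simp) h
            have hbc : b < c := hbB₂ c (by simp)
            rw [← (ih hsrs hndrs z b c hzb hbc hfz.2 hb_rs hc_rs).2]
    · -- GOAL 2 : orders (y,x,z) vs (y,z,x)
      obtain ⟨A, B, rfl, hA, hB⟩ := sorted_split y hsR
      have hsA : A.Pairwise (· < ·) := (sorted_append_iff.1 hsR).1
      obtain ⟨A₁, A₂, rfl, hA₁, hA₂⟩ := sorted_split x hsA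
      have hA₁z : ∀ t ∈ A₁, t ≤ z := fun t ht => (hA₁ t ht).trans hxz.le
      have hAz : ∀ a ∈ A₁ ++ A₂, a ≤ z := fun a ha => (hA a ha).trans hyz.le
      cases B with
      | nil =>
        cases A₂ with
        | nil =>
          have i1 : insertRow y ((A₁ ++ []) ++ []) = (A₁ ++ [y], none) :=
            insertRow_last' (fun a ha => hA a (by simpa using ha)) (by simp)
          have i2 : insertRow x (A₁ ++ [y]) = (A₁ ++ x :: [], some y) :=
            insertRow_mid' (B := ([] : List ℕ)) hA₁ hxy rfl rfl
          have i3 : insertRow z (A₁ ++ x :: []) = ((A₁ ++ x :: []) ++ [z], none) :=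
            insertRow_last' (le_append' hA₁z (le_cons' hxz.le le_nil')) rfl
          have j2 : insertRow z (A₁ ++ [y]) = ((A₁ ++ [y]) ++ [z], none) :=
            insertRow_last' (le_append' hA₁z (le_cons' hyz.le le_nil')) rfl
          have j3 : insertRow x ((A₁ ++ [y]) ++ [z]) = (A₁ ++ x :: [z], some y) :=
            insertRow_mid' (B := [z]) hA₁ hxy (by simp) rfl
          rw [insertTab_cons_none rs i1, insertTab_cons_some rs i2, insertTab_cons_none _ i3,
              insertTab_cons_none rs j2, insertTab_cons_some rs j3]
          simp
        | cons a₂ A₃ =>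
          have hxa₂ : x < a₂ := hA₂ a₂ (by simp)
          have hA₃y : ∀ t ∈ A₃, t ≤ y := fun t ht => hA t (by simp [ht])
          have hA₃z : ∀ t ∈ A₃, t ≤ z := fun t ht => (hA₃y t ht).trans hyz.le
          have i1 : insertRow y ((A₁ ++ a₂ :: A₃) ++ []) = ((A₁ ++ a₂ :: A₃) ++ [y], none) :=
            insertRow_last' (fun a ha => hA a (by simpa using ha)) (by simp)
          have i2 : insertRow x ((A₁ ++ a₂ :: A₃) ++ [y]) =
              (A₁ ++ x :: (A₃ ++ [y]), some a₂) :=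
            insertRow_mid' (B := A₃ ++ [y]) hA₁ hxa₂ (by simp) rfl
          have i3 : insertRow z (A₁ ++ x :: (A₃ ++ [y])) =
              ((A₁ ++ x :: (A₃ ++ [y])) ++ [z], none) :=
            insertRow_last'
              (le_append' hA₁z (le_cons' hxz.le (le_append' hA₃z (le_cons' hyz.le le_nil')))) rfl
          have j2 : insertRow z ((A₁ ++ a₂ :: A₃) ++ [y]) =
              (((A₁ ++ a₂ :: A₃) ++ [y]) ++ [z], none) :=
            insertRow_last' (le_append' hAz (le_cons' hyz.le le_nil')) rfl
          have j3 : insertRow x (((A₁ ++ a₂ :: A₃) ++ [y]) ++ [z]) =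
              (A₁ ++ x :: (A₃ ++ y :: [z]), some a₂) :=
            insertRow_mid' (B := A₃ ++ y :: [z]) hA₁ hxa₂ (by simp) rfl
          rw [insertTab_cons_none rs i1, insertTab_cons_some rs i2, insertTab_cons_none _ i3,
              insertTab_cons_none rs j2, insertTab_cons_some rs j3]
          simp
      | cons b B₂ =>
        have hyb : y < b := hB b (by simp)
        have hsB : (b :: B₂).Pairwise (· < ·) := (sorted_append_iff.1 hsR).2.1
        have hbB₂ : ∀ t ∈ B₂, b < t := (List.pairwise_cons.1 hsB).1
        have hsB₂ : B₂.Pairwise (· < ·) := (List.pairwise_cons.1 hsB).2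
        have hbz_ne : b ≠ z := fun h => hfz.1 (h ▸ (by simp))
        have hb_rs : b ∉ rs.flatten := fun h => hdisj (by simp) h
        rcases lt_or_gt_of_ne hbz_ne with hbz | hzb
        · -- b < z : split B₂ at z
          obtain ⟨E, F, rfl, hE, hF⟩ := sorted_split z hsB₂
          cases A₂ with
          | nil =>
            have i1 : insertRow y ((A₁ ++ []) ++ b :: (E ++ F)) =
                ((A₁ ++ []) ++ y :: (E ++ F), some b) :=
              insertRow_mid' (fun a ha => hA a ha) hyb rfl rfl
            have i2 : insertRow x ((A₁ ++ []) ++ y :: (E ++ F)) =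
                (A₁ ++ x :: (E ++ F), some y) :=
              insertRow_mid' (B := E ++ F) hA₁ hxy (by simp) rfl
            cases F with
            | nil =>
              have i3 : insertRow z (A₁ ++ x :: (E ++ [])) = ((A₁ ++ x :: E) ++ [z], none) :=
                insertRow_last' (le_append' hA₁z (le_cons' hxz.le hE)) (by simp)
              have j2 : insertRow z ((A₁ ++ []) ++ y :: (E ++ [])) =
                  (((A₁ ++ []) ++ y :: E) ++ [z], none) :=
                insertRow_last'
                  (le_append' (le_append' hA₁z le_nil') (le_cons' hyz.le hE)) (by simp)
              have j3 : insertRow x (((A₁ ++ []) ++ y :: E) ++ [z]) =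
                  (A₁ ++ x :: (E ++ [z]), some y) :=
                insertRow_mid' (B := E ++ [z]) hA₁ hxy (by simp) rfl
              rw [insertTab_cons_some rs i1, insertTab_cons_some _ i2, insertTab_cons_none _ i3,
                  insertTab_cons_none _ j2, insertTab_cons_some _ j3]
              simp
            | cons f F₂ =>
              have hzf : z < f := hF f (by simp)
              have hbf : b < f := hbB₂ f (by simp)
              have hf_rs : f ∉ rs.flatten := fun h => hdisj (by simp) h
              have i3 : insertRow z (A₁ ++ x :: (E ++ f :: F₂)) =
                  ((A₁ ++ x :: E) ++ z :: F₂, some f) :=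
                insertRow_mid' (B := F₂) (le_append' hA₁z (le_cons' hxz.le hE)) hzf
                  (by simp) (by simp)
              have j2 : insertRow z ((A₁ ++ []) ++ y :: (E ++ f :: F₂)) =
                  (((A₁ ++ []) ++ y :: E) ++ z :: F₂, some f) :=
                insertRow_mid' (B := F₂)
                  (le_append' (le_append' hA₁z le_nil') (le_cons' hyz.le hE)) hzf
                  (by simp) (by simp)
              have j3 : insertRow x (((A₁ ++ []) ++ y :: E) ++ z :: F₂) =
                  (A₁ ++ x :: (E ++ z :: F₂), some y) :=
                insertRow_mid' (B := E ++ z :: F₂) hA₁ hxy (by simp) rfl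
              rw [insertTab_cons_some rs i1, insertTab_cons_some _ i2, insertTab_cons_some _ i3,
                  insertTab_cons_some _ j2, insertTab_cons_some _ j3]
              rw [(ih hsrs hndrs y b f hyb hbf hfy.2 hb_rs hf_rs).2]
              simp
          | cons a₂ A₃ =>
            have hxa₂ : x < a₂ := hA₂ a₂ (by simp)
            have hA₃y : ∀ t ∈ A₃, t ≤ y := fun t ht => hA t (by simp [ht])
            have hA₃z : ∀ t ∈ A₃, t ≤ z := fun t ht => (hA₃y t ht).trans hyz.le
            have ha₂b : a₂ < b := lt_of_le_of_lt (hA a₂ (by simp)) hyb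
            have ha₂_rs : a₂ ∉ rs.flatten := fun h => hdisj (by simp) h
            have i1 : insertRow y ((A₁ ++ a₂ :: A₃) ++ b :: (E ++ F)) =
                ((A₁ ++ a₂ :: A₃) ++ y :: (E ++ F), some b) :=
              insertRow_mid' (fun a ha => hA a ha) hyb rfl rfl
            have i2 : insertRow x ((A₁ ++ a₂ :: A₃) ++ y :: (E ++ F)) =
                (A₁ ++ x :: (A₃ ++ y :: (E ++ F)), some a₂) :=
              insertRow_mid' (B := A₃ ++ y :: (E ++ F)) hA₁ hxa₂ (by simp) rfl
            cases F with
            | nil =>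
              have i3 : insertRow z (A₁ ++ x :: (A₃ ++ y :: (E ++ []))) =
                  ((A₁ ++ x :: (A₃ ++ y :: E)) ++ [z], none) :=
                insertRow_last' (le_append' hA₁z (le_cons' hxz.le
                  (le_append' hA₃z (le_cons' hyz.le hE)))) (by simp)
              have j2 : insertRow z ((A₁ ++ a₂ :: A₃) ++ y :: (E ++ [])) =
                  (((A₁ ++ a₂ :: A₃) ++ y :: E) ++ [z], none) :=
                insertRow_last' (le_append' hAz (le_cons' hyz.le hE)) (by simp)
              have j3 : insertRow x (((A₁ ++ a₂ :: A₃) ++ y :: E) ++ [z]) =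
                  (A₁ ++ x :: (A₃ ++ y :: (E ++ [z])), some a₂) :=
                insertRow_mid' (B := A₃ ++ y :: (E ++ [z])) hA₁ hxa₂ (by simp) rfl
              rw [insertTab_cons_some rs i1, insertTab_cons_some _ i2, insertTab_cons_none _ i3,
                  insertTab_cons_none _ j2, insertTab_cons_some _ j3]
              simp
            | cons f F₂ =>
              have hzf : z < f := hF f (by simp)
              have hbf : b < f := hbB₂ f (by simp)
              have hf_rs : f ∉ rs.flatten := fun h => hdisj (by simp) h
              have i3 : insertRow z (A₁ ++ x :: (A₃ ++ y :: (E ++ f :: F₂))) =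
                  ((A₁ ++ x :: (A₃ ++ y :: E)) ++ z :: F₂, some f) :=
                insertRow_mid' (B := F₂) (le_append' hA₁z (le_cons' hxz.le
                  (le_append' hA₃z (le_cons' hyz.le hE)))) hzf (by simp) (by simp)
              have j2 : insertRow z ((A₁ ++ a₂ :: A₃) ++ y :: (E ++ f :: F₂)) =
                  (((A₁ ++ a₂ :: A₃) ++ y :: E) ++ z :: F₂, some f) :=
                insertRow_mid' (B := F₂) (le_append' hAz (le_cons' hyz.le hE)) hzf
                  (by simp) (by simp)
              have j3 : insertRow x (((A₁ ++ a₂ :: A₃) ++ y :: E) ++ z :: F₂) =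
                  (A₁ ++ x :: (A₃ ++ y :: (E ++ z :: F₂)), some a₂) :=
                insertRow_mid' (B := A₃ ++ y :: (E ++ z :: F₂)) hA₁ hxa₂ (by simp) rfl
              rw [insertTab_cons_some rs i1, insertTab_cons_some _ i2, insertTab_cons_some _ i3,
                  insertTab_cons_some _ j2, insertTab_cons_some _ j3]
              rw [(ih hsrs hndrs a₂ b f ha₂b hbf ha₂_rs hb_rs hf_rs).2]
              simp
        · -- z < b
          cases A₂ with
          | nil =>
            have i1 : insertRow y ((A₁ ++ []) ++ b :: B₂) =
                ((A₁ ++ []) ++ y :: B₂, some b) :=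
              insertRow_mid' (fun a ha => hA a ha) hyb rfl rfl
            have i2 : insertRow x ((A₁ ++ []) ++ y :: B₂) = (A₁ ++ x :: B₂, some y) :=
              insertRow_mid' (B := B₂) hA₁ hxy (by simp) rfl
            cases B₂ with
            | nil =>
              have i3 : insertRow z (A₁ ++ x :: []) = ((A₁ ++ x :: []) ++ [z], none) :=
                insertRow_last' (le_append' hA₁z (le_cons' hxz.le le_nil')) rfl
              have j2 : insertRow z ((A₁ ++ []) ++ y :: []) =
                  (((A₁ ++ []) ++ y :: []) ++ [z], none) :=
                insertRow_last'
                  (le_append' (le_append' hA₁z le_nil') (le_cons' hyz.le le_nil')) rfl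
              have j3 : insertRow x (((A₁ ++ []) ++ y :: []) ++ [z]) =
                  (A₁ ++ x :: [z], some y) :=
                insertRow_mid' (B := [z]) hA₁ hxy (by simp) rfl
              rw [insertTab_cons_some rs i1, insertTab_cons_some _ i2, insertTab_cons_none _ i3,
                  insertTab_cons_none _ j2, insertTab_cons_some _ j3]
              simp
            | cons c B₃ =>
              have hzc : z < c := hzb.trans (hbB₂ c (by simp))
              have hbc : b < c := hbB₂ c (by simp)
              have hc_rs : c ∉ rs.flatten := fun h => hdisj (by simp) h
              have i3 : insertRow z (A₁ ++ x :: c :: B₃) =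
                  ((A₁ ++ x :: []) ++ z :: B₃, some c) :=
                insertRow_mid' (B := B₃) (le_append' hA₁z (le_cons' hxz.le le_nil')) hzc
                  (by simp) rfl
              have j2 : insertRow z ((A₁ ++ []) ++ y :: c :: B₃) =
                  (((A₁ ++ []) ++ y :: []) ++ z :: B₃, some c) :=
                insertRow_mid' (B := B₃)
                  (le_append' (le_append' hA₁z le_nil') (le_cons' hyz.le le_nil')) hzc
                  (by simp) rfl
              have j3 : insertRow x (((A₁ ++ []) ++ y :: []) ++ z :: B₃) =
                  (A₁ ++ x :: (z :: B₃), some y) :=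
                insertRow_mid' (B := z :: B₃) hA₁ hxy (by simp) rfl
              rw [insertTab_cons_some rs i1, insertTab_cons_some _ i2, insertTab_cons_some _ i3,
                  insertTab_cons_some _ j2, insertTab_cons_some _ j3]
              rw [(ih hsrs hndrs y b c hyb hbc hfy.2 hb_rs hc_rs).2]
              simp
          | cons a₂ A₃ =>
            have hxa₂ : x < a₂ := hA₂ a₂ (by simp)
            have hA₃y : ∀ t ∈ A₃, t ≤ y := fun t ht => hA t (by simp [ht])
            have hA₃z : ∀ t ∈ A₃, t ≤ z := fun t ht => (hA₃y t ht).trans hyz.le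
            have ha₂b : a₂ < b := lt_of_le_of_lt (hA a₂ (by simp)) hyb
            have ha₂_rs : a₂ ∉ rs.flatten := fun h => hdisj (by simp) h
            have i1 : insertRow y ((A₁ ++ a₂ :: A₃) ++ b :: B₂) =
                ((A₁ ++ a₂ :: A₃) ++ y :: B₂, some b) :=
              insertRow_mid' (fun a ha => hA a ha) hyb rfl rfl
            have i2 : insertRow x ((A₁ ++ a₂ :: A₃) ++ y :: B₂) =
                (A₁ ++ x :: (A₃ ++ y :: B₂), some a₂) :=
              insertRow_mid' (B := A₃ ++ y :: B₂) hA₁ hxa₂ (by simp) rfl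
            cases B₂ with
            | nil =>
              have i3 : insertRow z (A₁ ++ x :: (A₃ ++ y :: [])) =
                  ((A₁ ++ x :: (A₃ ++ y :: [])) ++ [z], none) :=
                insertRow_last' (le_append' hA₁z (le_cons' hxz.le
                  (le_append' hA₃z (le_cons' hyz.le le_nil')))) rfl
              have j2 : insertRow z ((A₁ ++ a₂ :: A₃) ++ y :: []) =
                  (((A₁ ++ a₂ :: A₃) ++ y :: []) ++ [z], none) :=
                insertRow_last' (le_append' hAz (le_cons' hyz.le le_nil')) rfl
              have j3 : insertRow x (((A₁ ++ a₂ :: A₃) ++ y :: []) ++ [z]) =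
                  (A₁ ++ x :: (A₃ ++ y :: [z]), some a₂) :=
                insertRow_mid' (B := A₃ ++ y :: [z]) hA₁ hxa₂ (by simp) rfl
              rw [insertTab_cons_some rs i1, insertTab_cons_some _ i2, insertTab_cons_none _ i3,
                  insertTab_cons_none _ j2, insertTab_cons_some _ j3]
              simp
            | cons c B₃ =>
              have hzc : z < c := hzb.trans (hbB₂ c (by simp))
              have hbc : b < c := hbB₂ c (by simp)
              have hc_rs : c ∉ rs.flatten := fun h => hdisj (by simp) h
              have i3 : insertRow z (A₁ ++ x :: (A₃ ++ y :: c :: B₃)) =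
                  ((A₁ ++ x :: (A₃ ++ y :: [])) ++ z :: B₃, some c) :=
                insertRow_mid' (B := B₃) (le_append' hA₁z (le_cons' hxz.le
                  (le_append' hA₃z (le_cons' hyz.le le_nil')))) hzc (by simp) (by simp)
              have j2 : insertRow z ((A₁ ++ a₂ :: A₃) ++ y :: c :: B₃) =
                  (((A₁ ++ a₂ :: A₃) ++ y :: []) ++ z :: B₃, some c) :=
                insertRow_mid' (B := B₃) (le_append' hAz (le_cons' hyz.le le_nil')) hzc
                  (by simp) (by simp)
              have j3 : insertRow x (((A₁ ++ a₂ :: A₃) ++ y :: []) ++ z :: B₃) =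
                  (A₁ ++ x :: (A₃ ++ y :: z :: B₃), some a₂) :=
                insertRow_mid' (B := A₃ ++ y :: z :: B₃) hA₁ hxa₂ (by simp) rfl
              rw [insertTab_cons_some rs i1, insertTab_cons_some _ i2, insertTab_cons_some _ i3,
                  insertTab_cons_some _ j2, insertTab_cons_some _ j3]
              rw [(ih hsrs hndrs a₂ b c ha₂b hbc ha₂_rs hb_rs hc_rs).2]
              simp

/-! §7 Knuth equivalence determines rsP -/

lemma K_rsP {a b : List ℕ} (h : K a b) (ha : a.Nodup) : rsP a = rsP b := by
  have main : ∀ a b, K a b → a.Perm b ∧ (a.Nodup → rsP a = rsP b) := by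
    intro a b h
    induction h with
    | rel a b hst =>
      refine ⟨hst.perm, ?_⟩
      intro hnd
      cases hst with
      | k1 u v h1 h2 =>
        rename_i x y z
        obtain ⟨hu, htr, hdisj⟩ := List.nodup_append'.1 hnd
        have hTB := rsP_TB hu
        have hfx : x ∉ (rsP u).flatten := fun h => hdisj (hTB.2.subset h) (by simp)
        have hfy : y ∉ (rsP u).flatten := fun h => hdisj (hTB.2.subset h) (by simp)
        have hfz : z ∉ (rsP u).flatten := fun h => hdisj (hTB.2.subset h) (by simp)
        rw [rsP_append, rsP_append]
        show List.foldl insertTab (rsP u) (x :: z :: y :: v)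
          = List.foldl insertTab (rsP u) (z :: x :: y :: v)
        simp only [List.foldl_cons]
        congr 1
        exact (L2core (rsP u) hTB.1.1 hTB.1.2 x y z h1 h2 hfx hfy hfz).1
      | k2 u v h1 h2 =>
        rename_i x y z
        obtain ⟨hu, htr, hdisj⟩ := List.nodup_append'.1 hnd
        have hTB := rsP_TB hu
        have hfx : x ∉ (rsP u).flatten := fun h => hdisj (hTB.2.subset h) (by simp)
        have hfy : y ∉ (rsP u).flatten := fun h => hdisj (hTB.2.subset h) (by simp)
        have hfz : z ∉ (rsP u).flatten := fun h => hdisj (hTB.2.subset h) (by simp)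
        rw [rsP_append, rsP_append]
        show List.foldl insertTab (rsP u) (y :: x :: z :: v)
          = List.foldl insertTab (rsP u) (y :: z :: x :: v)
        simp only [List.foldl_cons]
        congr 1
        exact (L2core (rsP u) hTB.1.1 hTB.1.2 x y z h1 h2 hfx hfy hfz).2
    | refl => exact ⟨List.Perm.refl _, fun _ => rfl⟩
    | symm a b _ ih =>
      exact ⟨ih.1.symm, fun hb => (ih.2 (ih.1.nodup_iff.2 hb)).symm⟩
    | trans a b c _ _ ih1 ih2 =>
      exact ⟨ih1.1.trans ih2.1, fun ha => (ih1.2 ha).trans (ih2.2 (ih1.1.nodup_iff.1 ha))⟩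
  exact (main a b h).2 ha

lemma rsP_eq_K {a b : List ℕ} (ha : a.Nodup) (hb : b.Nodup) (h : rsP a = rsP b) : K a b := by
  have h1 := K_rword_rsP ha
  have h2 := K_rword_rsP hb
  rw [h] at h1
  exact h1.trans h2.symm

/-! §8 Inversion sets and permutation words -/

lemma pair_sublist_iff {a b : ℕ} {w : List ℕ} :
    (∃ k l : ℕ, k < l ∧ w[k]? = some a ∧ w[l]? = some b) ↔ [a, b].Sublist w := by
  constructor
  · rintro ⟨k, l, hkl, hk, hl⟩
    induction w generalizing k l with
    | nil => simp at hk
    | cons c w ih =>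
      cases k with
      | zero =>
        simp at hk
        subst hk
        cases l with
        | zero => omega
        | succ l =>
          simp only [List.getElem?_cons_succ] at hl
          have hb : b ∈ w := by
            have := List.getElem?_eq_some_iff.1 hl
            obtain ⟨h1, h2⟩ := this
            exact h2 ▸ List.getElem_mem h1
          exact (List.cons_sublist_cons).2 (List.singleton_sublist.2 hb)
      | succ k =>
        cases l with
        | zero => omega
        | succ l =>
          simp only [List.getElem?_cons_succ] at hk hl
          exact (ih k l (by omega) hk hl).cons c
  · intro h
    induction w with
    | nil => simp at h
    | cons c w ih =>
      cases h with
      | cons _ h =>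
        obtain ⟨k, l, hkl, hk, hl⟩ := ih h
        exact ⟨k + 1, l + 1, by omega, by simpa using hk, by simpa using hl⟩
      | cons_cons _ h =>
        obtain ⟨l, hl⟩ := List.mem_iff_getElem?.1 (List.singleton_sublist.1 h)
        exact ⟨0, l + 1, by omega, by simp, by simpa using hl⟩

lemma invSet_mem_iff {w : List ℕ} {pr : ℕ × ℕ} :
    pr ∈ invSet w ↔ pr.2 < pr.1 ∧ [pr.1, pr.2].Sublist w := by
  unfold invSet
  rw [Set.mem_setOf_eq, pair_sublist_iff]

lemma isPermWord_of_perm_range {w : List ℕ} {n : ℕ} (h : w.Perm (List.range n)) :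
    IsPermWord w := by
  have hl : w.length = n := by simpa using h.length_eq
  rw [IsPermWord, hl]; exact h

lemma IsPermWord.nodup {w : List ℕ} (h : IsPermWord w) : w.Nodup :=
  (List.Perm.nodup_iff h).mpr (List.nodup_range)

lemma IsPermWord.mem_len_iff {w : List ℕ} (h : IsPermWord w) {t : ℕ} :
    t ∈ w ↔ t < w.length := by
  rw [List.Perm.mem_iff h, List.mem_range]

lemma range_filter_lt (p n : ℕ) : (List.range n).filter (· < p) = List.range (min p n) := by
  induction n with
  | zero => simp
  | succ n ih =>
    rw [List.range_succ, List.filter_append, ih]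
    by_cases h : n < p
    · have h1 : min p (n + 1) = min p n + 1 := by omega
      have h2 : min p n = n := by omega
      rw [h1, h2, List.range_succ]
      simp [h]
    · have h1 : min p (n + 1) = min p n := by omega
      rw [h1]
      simp [h]

lemma range_filter_ge (p n : ℕ) :
    (List.range n).filter (fun x => p ≤ x) = List.map (· + p) (List.range (n - p)) := by
  induction n with
  | zero => simp
  | succ n ih =>
    rw [List.range_succ, List.filter_append]
    by_cases h : p ≤ n
    · have h1 : n + 1 - p = (n - p) + 1 := by omega
      rw [ih, h1, List.range_succ, List.map_append]
      have h2 : n - p + p = n := by omega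
      simp [h, h2]
    · have h1 : n + 1 - p = n - p := by omega
      rw [ih, h1]
      simp [h]

lemma permWord_filter_lt {w : List ℕ} (h : IsPermWord w) (p : ℕ) :
    (w.filter (· < p)).Perm (List.range (min p w.length)) := by
  rw [← range_filter_lt]
  exact h.filter _

lemma isPermWord_filter_lt {w : List ℕ} (h : IsPermWord w) (p : ℕ) :
    IsPermWord (w.filter (· < p)) :=
  isPermWord_of_perm_range (permWord_filter_lt h p)

lemma length_filter_lt {w : List ℕ} (h : IsPermWord w) (p : ℕ) :
    (w.filter (· < p)).length = min p w.length := by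
  simpa using (permWord_filter_lt h p).length_eq

lemma permWord_filter_ge {w : List ℕ} (h : IsPermWord w) (p : ℕ) :
    (w.filter (fun x => p ≤ x)).Perm (List.map (· + p) (List.range (w.length - p))) := by
  rw [← range_filter_ge]
  exact h.filter _

lemma permWord_filter_ge_sub {w : List ℕ} (h : IsPermWord w) (p : ℕ) :
    ((w.filter (fun x => p ≤ x)).map (· - p)).Perm (List.range (w.length - p)) := by
  refine ((permWord_filter_ge h p).map _).trans ?_
  rw [List.map_map]
  have : ((· - p) ∘ (· + p)) = (id : ℕ → ℕ) := by
    funext i; simp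
  rw [this, List.map_id]

lemma isPermWord_filter_ge_sub {w : List ℕ} (h : IsPermWord w) (p : ℕ) :
    IsPermWord ((w.filter (fun x => p ≤ x)).map (· - p)) :=
  isPermWord_of_perm_range (permWord_filter_ge_sub h p)

/-! §9 stW lemmas -/

lemma stW_eq_map_sub {w : List ℕ} {c m : ℕ} (h : w.Perm (List.map (· + c) (List.range m))) :
    stW w = w.map (· - c) := by
  unfold stW
  refine List.map_congr_left ?_
  intro x hx
  have hxm : x ∈ List.map (· + c) (List.range m) := h.subset hx
  obtain ⟨i, hi, rfl⟩ := List.mem_map.1 hxm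
  rw [List.mem_range] at hi
  have hlen := (h.filter (· < i + c)).length_eq
  rw [hlen, List.filter_map]
  have : (List.filter ((fun x => decide (x < i + c)) ∘ (· + c)) (List.range m))
      = List.filter (· < i) (List.range m) := by
    apply List.filter_congr
    intro j _
    simp only [Function.comp_apply]
    by_cases hj : j < i
    · simp [hj, (show j + c < i + c by omega)]
    · simp [hj, (show ¬ (j + c < i + c) by omega)]
  rw [this, range_filter_lt]
  have : min i m = i := by omega
  simp [this]

lemma stW_of_permWord {w : List ℕ} (h : IsPermWord w) : stW w = w := by
  have h0 : w.Perm (List.map (· + 0) (List.range w.length)) := by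
    simpa [IsPermWord] using h
  rw [stW_eq_map_sub h0]
  simp

lemma stW_filter_lt {σ : List ℕ} (hσ : IsPermWord σ) (p : ℕ) :
    stW (σ.filter (· < p)) = σ.filter (· < p) :=
  stW_of_permWord (isPermWord_filter_lt hσ p)

lemma stW_filter_ge {σ : List ℕ} (hσ : IsPermWord σ) (p : ℕ) :
    stW (σ.filter (fun x => p ≤ x)) = (σ.filter (fun x => p ≤ x)).map (· - p) :=
  stW_eq_map_sub (permWord_filter_ge hσ p)

lemma map_sub_add {w : List ℕ} {p : ℕ} (h : ∀ t ∈ w, p ≤ t) :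
    (w.map (· - p)).map (· + p) = w := by
  rw [List.map_map]
  have : ∀ t ∈ w, ((· + p) ∘ (· - p)) t = id t := by
    intro t ht; have := h t ht; simp; omega
  rw [List.map_congr_left this, List.map_id]

/-! §10 weak order lemmas -/

lemma invSet_mono_append {w s : List ℕ} : invSet w ⊆ invSet (w ++ s) := by
  intro pr h
  rw [invSet_mem_iff] at h ⊢
  exact ⟨h.1, h.2.trans (List.sublist_append_left w s)⟩

lemma invSet_mono_append_right {w s : List ℕ} : invSet w ⊆ invSet (s ++ w) := by
  intro pr h
  rw [invSet_mem_iff] at h ⊢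
  exact ⟨h.1, h.2.trans (List.sublist_append_right s w)⟩


lemma sublist_pair_append {a b : ℕ} {u v : List ℕ} (h : ([a, b] : List ℕ).Sublist (u ++ v)) :
    ([a, b] : List ℕ).Sublist u ∨ (([a] : List ℕ).Sublist u ∧ ([b] : List ℕ).Sublist v) ∨
      ([a, b] : List ℕ).Sublist v := by
  rcases List.sublist_append_iff.1 h with ⟨l₁, l₂, heq, h1, h2⟩
  cases l₁ with
  | nil =>
    right; right
    simp only [List.nil_append] at heq
    rwa [← heq] at h2
  | cons c t =>
    cases t with
    | nil =>
      right; left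
      have hab : a = c ∧ [b] = l₂ := by simpa using heq
      obtain ⟨rfl, h4⟩ := hab
      exact ⟨h1, h4 ▸ h2⟩
    | cons d t2 =>
      left
      have hab : a = c ∧ b = d ∧ (t2 = [] ∧ l₂ = []) := by
        have h' : a = c ∧ b = d ∧ [] = t2 ++ l₂ := by simpa using heq
        refine ⟨h'.1, h'.2.1, by simpa using h'.2.2.symm⟩
      obtain ⟨rfl, rfl, rfl, -⟩ := hab
      simpa using h1

lemma sublist_pair_map {f : ℕ → ℕ} {a b : ℕ} {w : List ℕ}
    (h : [a, b].Sublist (w.map f)) : ∃ a' b', [a', b'].Sublist w ∧ a = f a' ∧ b = f b' := by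
  obtain ⟨l', hl', hmap⟩ := List.sublist_map_iff.1 h
  cases l' with
  | nil => simp at hmap
  | cons a' t =>
    cases t with
    | nil => simp at hmap
    | cons b' t2 =>
      cases t2 with
      | cons c t3 => simp at hmap
      | nil =>
        obtain ⟨h1, h2⟩ : a = f a' ∧ b = f b' := by simpa using hmap
        exact ⟨a', b', hl', h1, h2⟩

lemma invSet_append_pad {w : List ℕ} {m k : ℕ} (hw : ∀ t ∈ w, t < m) :
    invSet (w ++ List.map (· + m) (List.range k)) = invSet w := by
  ext ⟨a, b⟩
  rw [invSet_mem_iff, invSet_mem_iff]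
  refine and_congr_right fun hba => ⟨?_, fun h => h.trans (List.sublist_append_left _ _)⟩
  intro h
  rcases List.sublist_append_iff.1 h with ⟨l₁, l₂, heq, h1, h2⟩
  match l₁, l₂, heq with
  | [a', b'], [], heq => simp at heq; simp_all
  | [a'], [b'], heq =>
    simp at heq
    obtain ⟨rfl, rfl⟩ := heq
    have ha : a ∈ w := List.singleton_sublist.1 h1
    have hb : b ∈ List.map (· + m) (List.range k) := List.singleton_sublist.1 h2
    obtain ⟨i, _, rfl⟩ := List.mem_map.1 hb
    have := hw a ha
    omega
  | [], [a', b'], heq =>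
    simp at heq
    obtain ⟨rfl, rfl⟩ := heq
    obtain ⟨a'', b'', hsub, rfl, rfl⟩ := sublist_pair_map h2
    have hpw : List.Pairwise (· < ·) [a'', b''] :=
      List.Pairwise.sublist hsub (List.pairwise_lt_range (n := k))
    have : a'' < b'' := by simpa using hpw
    omega

lemma weakLe_filter_lt {x y : List ℕ} (h : weakLe x y) (p : ℕ) :
    weakLe (x.filter (· < p)) (y.filter (· < p)) := by
  rintro ⟨a, b⟩ hpr
  rw [invSet_mem_iff] at hpr ⊢
  obtain ⟨hba, hsub⟩ := hpr
  have ha : a < p := by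
    have h' := hsub.subset (show a ∈ [a, b] by simp)
    simpa using (List.mem_filter.1 h').2
  have hb : b < p := by
    have h' := hsub.subset (show b ∈ [a, b] by simp)
    simpa using (List.mem_filter.1 h').2
  have h2 : ([a, b] : List ℕ).Sublist y := by
    have := h (show (a, b) ∈ invSet x from invSet_mem_iff.2
      ⟨hba, hsub.trans (List.filter_sublist (l := x))⟩)
    exact (invSet_mem_iff.1 this).2
  refine ⟨hba, ?_⟩
  have := h2.filter (· < p)
  simpa [ha, hb] using this

lemma weakLe_filter_ge {x y : List ℕ} (h : weakLe x y) (p : ℕ) :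
    weakLe ((x.filter (fun t => p ≤ t)).map (· - p)) ((y.filter (fun t => p ≤ t)).map (· - p)) := by
  rintro ⟨a, b⟩ hpr
  rw [invSet_mem_iff] at hpr ⊢
  obtain ⟨hba, hsub⟩ := hpr
  obtain ⟨a', b', hsub', rfl, rfl⟩ := sublist_pair_map hsub
  have ha' : p ≤ a' := by
    have h' := hsub'.subset (show a' ∈ [a', b'] by simp)
    simpa using (List.mem_filter.1 h').2
  have hb' : p ≤ b' := by
    have h' := hsub'.subset (show b' ∈ [a', b'] by simp)
    simpa using (List.mem_filter.1 h').2
  have hba' : b' < a' := by omega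
  have h2 : ([a', b'] : List ℕ).Sublist y := by
    have := h (show (a', b') ∈ invSet x from invSet_mem_iff.2
      ⟨hba', hsub'.trans (List.filter_sublist (l := x))⟩)
    exact (invSet_mem_iff.1 this).2
  refine ⟨hba, ?_⟩
  have h3 : ([a', b'] : List ℕ).Sublist (y.filter (fun t => p ≤ t)) := by
    have := h2.filter (fun t => p ≤ t)
    simpa [ha', hb'] using this
  have := h3.map (· - p)
  simpa using this

lemma weakLe_sep {σ : List ℕ} (p : ℕ) :
    weakLe σ (σ.filter (fun t => p ≤ t) ++ σ.filter (· < p)) := by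
  rintro ⟨a, b⟩ hpr
  rw [invSet_mem_iff] at hpr ⊢
  obtain ⟨hba, hsub⟩ := hpr
  refine ⟨hba, ?_⟩
  have ha : a ∈ σ := hsub.subset (by simp)
  have hb : b ∈ σ := hsub.subset (by simp)
  by_cases hbp : p ≤ b
  · have : ([a, b] : List ℕ).Sublist (σ.filter (fun t => p ≤ t)) := by
      have := hsub.filter (fun t => p ≤ t)
      simpa [hbp, (show p ≤ a by omega)] using this
    exact this.trans (List.sublist_append_left _ _)
  · by_cases hap : a < p
    · have : ([a, b] : List ℕ).Sublist (σ.filter (· < p)) := by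
        have := hsub.filter (· < p)
        simpa [hap, (show b < p by omega)] using this
      exact this.trans (List.sublist_append_right _ _)
    · have h1 : ([a] : List ℕ).Sublist (σ.filter (fun t => p ≤ t)) := by
        rw [List.singleton_sublist, List.mem_filter]
        exact ⟨ha, by simpa using (by omega : p ≤ a)⟩
      have h2 : ([b] : List ℕ).Sublist (σ.filter (· < p)) := by
        rw [List.singleton_sublist, List.mem_filter]
        exact ⟨hb, by simpa using (by omega : b < p)⟩
      exact h1.append h2

lemma weakLe_shift_append {x y a₀ : List ℕ} (h : weakLe x y) (hmem : ∀ t ∈ x, t ∈ y) (c : ℕ) :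
    weakLe (x.map (· + c) ++ a₀) (y.map (· + c) ++ a₀) := by
  rintro ⟨a, b⟩ hpr
  rw [invSet_mem_iff] at hpr ⊢
  obtain ⟨hba, hsub⟩ := hpr
  refine ⟨hba, ?_⟩
  rcases sublist_pair_append hsub with h1 | ⟨h1, h2⟩ | h1
  · obtain ⟨a'', b'', hsub', rfl, rfl⟩ := sublist_pair_map h1
    have hba'' : b'' < a'' := by omega
    have h2 : ([a'', b''] : List ℕ).Sublist y :=
      (invSet_mem_iff.1 (h (show ((a'', b'') : ℕ × ℕ) ∈ invSet x from
        invSet_mem_iff.2 ⟨hba'', hsub'⟩))).2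
    exact ((h2.map (· + c)).trans (List.sublist_append_left _ _))
  · have ha : a ∈ x.map (· + c) := List.singleton_sublist.1 h1
    obtain ⟨a'', ha'', rfl⟩ := List.mem_map.1 ha
    have h1' : ([a'' + c] : List ℕ).Sublist (y.map (· + c)) :=
      List.singleton_sublist.2 (List.mem_map.2 ⟨a'', hmem a'' ha'', rfl⟩)
    exact h1'.append h2
  · exact h1.trans (List.sublist_append_right _ _)

lemma weakLe_append_left {z x y : List ℕ} (h : weakLe x y) (hmem : ∀ t ∈ x, t ∈ y) :
    weakLe (z ++ x) (z ++ y) := by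
  rintro ⟨a, b⟩ hpr
  rw [invSet_mem_iff] at hpr ⊢
  obtain ⟨hba, hsub⟩ := hpr
  refine ⟨hba, ?_⟩
  rcases sublist_pair_append hsub with h1 | ⟨h1, h2⟩ | h1
  · exact h1.trans (List.sublist_append_left _ _)
  · refine h1.append ?_
    exact List.singleton_sublist.2 (hmem b (List.singleton_sublist.1 h2))
  · have h2' : ([a, b] : List ℕ).Sublist y :=
      (invSet_mem_iff.1 (h (show ((a, b) : ℕ × ℕ) ∈ invSet x from
        invSet_mem_iff.2 ⟨hba, h1⟩))).2
    exact h2'.trans (List.sublist_append_right _ _)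

/-! §11 chain transfer -/

def SRel (S : List ℕ → List ℕ → Prop) : List (List ℕ) → List (List ℕ) → Prop :=
  fun T T' => ∃ x y, S x y ∧ rsP x = T ∧ rsP y = T'

def WS : List ℕ → List ℕ → Prop := fun x y => IsPermWord x ∧ IsPermWord y ∧ weakLe x y

def WSn (n : ℕ) : List ℕ → List ℕ → Prop :=
  fun x y => IsPermWord x ∧ IsPermWord y ∧ x.length = n ∧ y.length = n ∧ weakLe x y

lemma taskinLe_iff {T T' : List (List ℕ)} :
    taskinLe T T' ↔ Relation.ReflTransGen (SRel WS) T T' := by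
  constructor
  · refine fun h => Relation.ReflTransGen.mono ?_ _ _ h
    rintro a b ⟨u, v, h1, h2, h3, h4, h5⟩
    exact ⟨u, v, ⟨h1, h2, h5⟩, h3, h4⟩
  · refine fun h => Relation.ReflTransGen.mono ?_ _ _ h
    rintro a b ⟨u, v, ⟨h1, h2, h5⟩, h3, h4⟩
    exact ⟨u, v, h1, h2, h3, h4, h5⟩

lemma transfer {S S' : List ℕ → List ℕ → Prop} {D : List ℕ → Prop} {F : List ℕ → List ℕ}
    (hSdom : ∀ x y, S x y → D x ∧ D y)
    (hstep : ∀ x y, S x y → S' (F x) (F y))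
    (hinv : ∀ x y, D x → D y → rsP x = rsP y → rsP (F x) = rsP (F y))
    {T T' : List (List ℕ)} (h : Relation.ReflTransGen (SRel S) T T')
    {a b : List ℕ} (ha : D a) (hb : D b) (hTa : rsP a = T) (hTb : rsP b = T') :
    Relation.ReflTransGen (SRel S') (rsP (F a)) (rsP (F b)) := by
  induction h generalizing b with
  | refl =>
    rw [hinv a b ha hb (hTa.trans hTb.symm)]
  | @tail T₁ T₂ hchain hstp ih =>
    obtain ⟨u, v, hS, hu, hv⟩ := hstp
    have hDu := (hSdom _ _ hS).1
    have hDv := (hSdom _ _ hS).2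
    have hch : Relation.ReflTransGen (SRel S') (rsP (F a)) (rsP (F u)) := ih hDu hu
    have hstep' : SRel S' (rsP (F u)) (rsP (F v)) := ⟨F u, F v, hstep _ _ hS, rfl, rfl⟩
    have hfin : rsP (F v) = rsP (F b) := hinv v b hDv hb (hv.trans hTb.symm)
    exact hfin ▸ hch.tail hstep'

/-! §12 normalization -/

def padTo (p : ℕ) (w : List ℕ) : List ℕ :=
  w ++ List.map (· + w.length) (List.range (p - w.length))

lemma padTo_perm {w : List ℕ} (h : IsPermWord w) {p : ℕ} (hlen : w.length ≤ p) :
    (padTo p w).Perm (List.range p) := by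
  unfold padTo
  have h1 : (w ++ List.map (· + w.length) (List.range (p - w.length))).Perm
      (List.range w.length ++ List.map (· + w.length) (List.range (p - w.length))) :=
    h.append_right _
  refine h1.trans ?_
  have h2 : List.range p
      = List.range w.length ++ List.map (w.length + ·) (List.range (p - w.length)) := by
    rw [← List.range_add]
    congr 1
    omega
  rw [h2]
  refine List.Perm.append_left _ ?_
  have : List.map (· + w.length) (List.range (p - w.length))
      = List.map (w.length + ·) (List.range (p - w.length)) := by
    apply List.map_congr_left; intro i _; omega
  rw [this]

lemma isPermWord_padTo {w : List ℕ} (h : IsPermWord w) {p : ℕ} (hlen : w.length ≤ p) :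
    IsPermWord (padTo p w) :=
  isPermWord_of_perm_range (padTo_perm h hlen)

lemma length_padTo {w : List ℕ} (h : IsPermWord w) {p : ℕ} (hlen : w.length ≤ p) :
    (padTo p w).length = p := by
  simpa using (padTo_perm h hlen).length_eq

lemma invSet_padTo {w : List ℕ} (h : IsPermWord w) (p : ℕ) :
    invSet (padTo p w) = invSet w :=
  invSet_append_pad (fun t ht => h.mem_len_iff.1 ht)

def normF (p : ℕ) (w : List ℕ) : List ℕ := padTo p (w.filter (· < p))

lemma normF_eq_self {w : List ℕ} (h : IsPermWord w) {p : ℕ} (hlen : w.length = p) :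
    normF p w = w := by
  unfold normF padTo
  have h1 : w.filter (· < p) = w := by
    rw [List.filter_eq_self]
    intro a ha
    simpa using (show a < p from hlen ▸ h.mem_len_iff.1 ha)
  rw [h1, hlen]
  simp

lemma normF_perm {w : List ℕ} (h : IsPermWord w) (p : ℕ) : IsPermWord (normF p w) :=
  isPermWord_padTo (isPermWord_filter_lt h p) (by rw [length_filter_lt h p]; omega)

lemma normF_length {w : List ℕ} (h : IsPermWord w) (p : ℕ) : (normF p w).length = p :=
  length_padTo (isPermWord_filter_lt h p) (by rw [length_filter_lt h p]; omega)

lemma normF_weakLe {x y : List ℕ} (hx : IsPermWord x) (hy : IsPermWord y)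
    (h : weakLe x y) (p : ℕ) : weakLe (normF p x) (normF p y) := by
  unfold normF
  unfold weakLe
  rw [invSet_padTo (isPermWord_filter_lt hx p), invSet_padTo (isPermWord_filter_lt hy p)]
  exact weakLe_filter_lt h p

lemma rsP_norm_congr {x y : List ℕ} (p : ℕ) (hx : IsPermWord x) (hy : IsPermWord y)
    (h : rsP x = rsP y) : rsP (normF p x) = rsP (normF p y) := by
  have hK : K x y := rsP_eq_K hx.nodup hy.nodup h
  have hKf : K (x.filter (· < p)) (y.filter (· < p)) := hK.filter_lt p
  have hlen : (y.filter (· < p)).length = (x.filter (· < p)).length := hKf.perm.length_eq.symm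
  have hKp : K (normF p x) (normF p y) := by
    unfold normF padTo
    rw [hlen]
    exact hKf.append_right _
  exact K_rsP hKp (normF_perm hx p).nodup

/-! §13 congruence lemmas for the transfers -/

lemma rsP_filter_congr {x y : List ℕ} (p : ℕ) (hx : IsPermWord x) (hy : IsPermWord y)
    (h : rsP x = rsP y) : rsP (x.filter (· < p)) = rsP (y.filter (· < p)) :=
  K_rsP ((rsP_eq_K hx.nodup hy.nodup h).filter_lt p) (isPermWord_filter_lt hx p).nodup

lemma rsP_big_congr {x y : List ℕ} (p : ℕ) (hx : IsPermWord x) (hy : IsPermWord y)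
    (h : rsP x = rsP y) :
    rsP ((x.filter (fun t => p ≤ t)).map (· - p))
      = rsP ((y.filter (fun t => p ≤ t)).map (· - p)) := by
  have hK := (rsP_eq_K hx.nodup hy.nodup h).filter_ge p
  have hKm := hK.map_sub p (fun t ht => by simpa using (List.mem_filter.1 ht).2)
  exact K_rsP hKm (isPermWord_filter_ge_sub hx p).nodup

lemma rsP_shiftappend_congr {x y a₀ : List ℕ} {p : ℕ} (ha₀ : ∀ t ∈ a₀, t < p)
    (ha₀nd : a₀.Nodup) (hx : IsPermWord x) (hy : IsPermWord y) (h : rsP x = rsP y) :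
    rsP (x.map (· + p) ++ a₀) = rsP (y.map (· + p) ++ a₀) := by
  have hK := ((rsP_eq_K hx.nodup hy.nodup h).map_shift p).append_right a₀
  refine K_rsP hK ?_
  rw [List.nodup_append']
  refine ⟨hx.nodup.map (fun a b hab => by omega), ha₀nd, ?_⟩
  intro t ht ht'
  obtain ⟨t', _, rfl⟩ := List.mem_map.1 ht
  have := ha₀ _ ht'
  omega

lemma rsP_appendleft_congr {z x y : List ℕ} {p : ℕ} (hz : ∀ t ∈ z, p ≤ t)
    (hznd : z.Nodup) (hx : IsPermWord x) (hy : IsPermWord y)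
    (hxl : x.length = p) (h : rsP x = rsP y) :
    rsP (z ++ x) = rsP (z ++ y) := by
  have hK := (rsP_eq_K hx.nodup hy.nodup h).append_left z
  refine K_rsP hK ?_
  rw [List.nodup_append']
  refine ⟨hznd, hx.nodup, ?_⟩
  intro t ht ht'
  have h1 := hz t ht
  have h2 : t < p := hxl ▸ hx.mem_len_iff.1 ht'
  omega

/-! §14 triangle lemmas -/

lemma isPermWord_triangle {u v : List ℕ} (hu : IsPermWord u) (hv : IsPermWord v) :
    IsPermWord (triangle v u) := by
  unfold triangle
  refine isPermWord_of_perm_range (n := u.length + v.length) ?_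
  have h1 : (v.map (· + u.length) ++ u).Perm (u ++ v.map (· + u.length)) :=
    List.perm_append_comm
  refine h1.trans ?_
  have h2 : (u ++ v.map (· + u.length)).Perm
      (List.range u.length ++ (List.range v.length).map (· + u.length)) :=
    List.Perm.append hu (hv.map _)
  refine h2.trans ?_
  rw [List.range_add]
  refine List.Perm.append_left _ ?_
  have : (List.range v.length).map (· + u.length)
      = (List.range v.length).map (u.length + ·) := by
    apply List.map_congr_left; intro i _; omega
  rw [this]

lemma filter_lt_triangle {u v : List ℕ} (hu : IsPermWord u) {p : ℕ} (hup : u.length = p) :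
    (triangle v u).filter (· < p) = u := by
  unfold triangle
  rw [List.filter_append]
  have h1 : (v.map (· + u.length)).filter (· < p) = [] := by
    rw [List.filter_eq_nil_iff]
    intro t ht
    obtain ⟨t', _, rfl⟩ := List.mem_map.1 ht
    simpa using (by omega : ¬ t' + u.length < p)
  have h2 : u.filter (· < p) = u := by
    rw [List.filter_eq_self]
    intro t ht
    simpa using (show t < p from hup ▸ hu.mem_len_iff.1 ht)
  rw [h1, h2, List.nil_append]

lemma filter_ge_triangle {u v : List ℕ} (hu : IsPermWord u) {p : ℕ} (hup : u.length = p) :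
    ((triangle v u).filter (fun t => p ≤ t)).map (· - p) = v := by
  unfold triangle
  rw [List.filter_append]
  have h1 : (v.map (· + u.length)).filter (fun t => p ≤ t) = v.map (· + u.length) := by
    rw [List.filter_eq_self]
    intro t ht
    obtain ⟨t', _, rfl⟩ := List.mem_map.1 ht
    simpa using (by omega : p ≤ t' + u.length)
  have h2 : u.filter (fun t => p ≤ t) = [] := by
    rw [List.filter_eq_nil_iff]
    intro t ht
    have : t < p := hup ▸ hu.mem_len_iff.1 ht
    simpa using (by omega : ¬ p ≤ t)
  rw [h1, h2, List.append_nil, List.map_map]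
  have : ((· - p) ∘ (· + u.length)) = (id : ℕ → ℕ) := by
    funext i; simp [hup]
  rw [this, List.map_id]

/-! §15 perm word block lemma -/

lemma isPermWord_shiftappend {A B : List ℕ} {p : ℕ} (hA : IsPermWord A) (hB : IsPermWord B)
    (hBl : B.length = p) : IsPermWord (A.map (· + p) ++ B) := by
  refine isPermWord_of_perm_range (n := p + A.length) ?_
  have h1 : (A.map (· + p) ++ B).Perm (B ++ A.map (· + p)) := List.perm_append_comm
  refine h1.trans ?_
  have h2 : (B ++ A.map (· + p)).Perm
      (List.range p ++ (List.range A.length).map (· + p)) :=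
    List.Perm.append (hBl ▸ hB) (hA.map _)
  refine h2.trans ?_
  rw [List.range_add]
  refine List.Perm.append_left _ ?_
  have : (List.range A.length).map (· + p) = (List.range A.length).map (p + ·) := by
    apply List.map_congr_left; intro i _; omega
  rw [this]

/-! §16 the main theorem -/


/-- **Main lemma.** Let `n = p + q`, `Σ = P(σ)` a standard tableau
with `n` cells, `A = st(Σ|{0,…,p-1})` and `B = st(Σ|{p,…,n-1})`.  Then for
standard tableaux `U = P(u)` with `p` cells and `V = P(v)` with `q` cells:
`Σ ≤ V △ U` in the Taskin weak order iff `A ≤ U` and `B ≤ V`. -/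
theorem taskin_main_lemma (p q : ℕ) (σ u v : List ℕ)
    (hσ : IsPermWord σ) (hu : IsPermWord u) (hv : IsPermWord v)
    (hσn : σ.length = p + q) (hup : u.length = p) (hvq : v.length = q) :
    taskinLe (rsP σ) (rsP (triangle v u)) ↔
      taskinLe (rsP (stW (σ.filter (· < p)))) (rsP u) ∧
      taskinLe (rsP (stW (σ.filter (fun x => p ≤ x)))) (rsP v) := by
  have ha₀perm : IsPermWord (σ.filter (· < p)) := isPermWord_filter_lt hσ p
  have ha₀len : (σ.filter (· < p)).length = p := by
    rw [length_filter_lt hσ p, hσn]; omega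
  have ha₀lt : ∀ t ∈ σ.filter (· < p), t < p := fun t ht => by
    simpa using (List.mem_filter.1 ht).2
  have hb₀perm : IsPermWord ((σ.filter (fun t => p ≤ t)).map (· - p)) :=
    isPermWord_filter_ge_sub hσ p
  have hb₀len : ((σ.filter (fun t => p ≤ t)).map (· - p)).length = q := by
    have h1 := (permWord_filter_ge_sub hσ p).length_eq
    simp only [List.length_range] at h1
    rw [h1, hσn]; omega
  constructor
  · intro h
    rw [taskinLe_iff] at h
    constructor
    · rw [stW_filter_lt hσ, taskinLe_iff]
      have hres := transfer (S := WS) (S' := WS) (D := IsPermWord)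
        (F := fun w => w.filter (· < p))
        (fun x y hS => ⟨hS.1, hS.2.1⟩)
        (fun x y hS => ⟨isPermWord_filter_lt hS.1 p, isPermWord_filter_lt hS.2.1 p,
          weakLe_filter_lt hS.2.2 p⟩)
        (fun x y hx hy hxy => rsP_filter_congr p hx hy hxy)
        h hσ (isPermWord_triangle hu hv) rfl rfl
      have hres' : Relation.ReflTransGen (SRel WS) (rsP (σ.filter (· < p)))
          (rsP ((triangle v u).filter (· < p))) := hres
      rwa [filter_lt_triangle hu hup] at hres'
    · rw [stW_filter_ge hσ, taskinLe_iff]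
      have hres := transfer (S := WS) (S' := WS) (D := IsPermWord)
        (F := fun w => (w.filter (fun t => p ≤ t)).map (· - p))
        (fun x y hS => ⟨hS.1, hS.2.1⟩)
        (fun x y hS => ⟨isPermWord_filter_ge_sub hS.1 p, isPermWord_filter_ge_sub hS.2.1 p,
          weakLe_filter_ge hS.2.2 p⟩)
        (fun x y hx hy hxy => rsP_big_congr p hx hy hxy)
        h hσ (isPermWord_triangle hu hv) rfl rfl
      have hres' : Relation.ReflTransGen (SRel WS)
          (rsP ((σ.filter (fun t => p ≤ t)).map (· - p)))
          (rsP (((triangle v u).filter (fun t => p ≤ t)).map (· - p))) := hres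
      rwa [filter_ge_triangle hu hup] at hres'
  · rintro ⟨hA, hB⟩
    rw [stW_filter_lt hσ, taskinLe_iff] at hA
    rw [stW_filter_ge hσ, taskinLe_iff] at hB
    rw [taskinLe_iff]
    -- step 0
    have hw₀perm : IsPermWord (σ.filter (fun t => p ≤ t) ++ σ.filter (· < p)) := by
      refine isPermWord_of_perm_range (n := σ.length) ?_
      refine List.Perm.trans ?_ hσ
      have h1 := List.filter_append_perm (fun t => decide (p ≤ t)) σ
      have h2 : σ.filter (fun x => !decide (p ≤ x)) = σ.filter (· < p) := by
        apply List.filter_congr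
        intro t _
        by_cases h : p ≤ t
        · simp [h, (show ¬ t < p by omega)]
        · simp [h, (show t < p by omega)]
      rwa [h2] at h1
    have hstep0 : SRel WS (rsP σ) (rsP (σ.filter (fun t => p ≤ t) ++ σ.filter (· < p))) :=
      ⟨σ, _, ⟨hσ, hw₀perm, weakLe_sep p⟩, rfl, rfl⟩
    -- lift the B-chain
    have hBn := transfer (S := WS) (S' := WSn q) (D := IsPermWord) (F := normF q)
      (fun x y hS => ⟨hS.1, hS.2.1⟩)
      (fun x y hS => ⟨normF_perm hS.1 q, normF_perm hS.2.1 q, normF_length hS.1 q,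
        normF_length hS.2.1 q, normF_weakLe hS.1 hS.2.1 hS.2.2 q⟩)
      (fun x y hx hy hxy => rsP_norm_congr q hx hy hxy) hB hb₀perm hv rfl rfl
    rw [normF_eq_self hb₀perm hb₀len, normF_eq_self hv hvq] at hBn
    have hB1 := transfer (S := WSn q) (S' := WS) (D := IsPermWord)
      (F := fun w => w.map (· + p) ++ σ.filter (· < p))
      (fun x y hS => ⟨hS.1, hS.2.1⟩)
      (fun x y hS => by
        obtain ⟨hxp, hyp, hxl, hyl, hw⟩ := hS
        refine ⟨isPermWord_shiftappend hxp ha₀perm ha₀len,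
          isPermWord_shiftappend hyp ha₀perm ha₀len, ?_⟩
        refine weakLe_shift_append hw ?_ p
        intro t ht
        have h1 : t < q := hxl ▸ hxp.mem_len_iff.1 ht
        exact hyp.mem_len_iff.2 (by omega))
      (fun x y hx hy hxy => rsP_shiftappend_congr ha₀lt ha₀perm.nodup hx hy hxy)
      hBn hb₀perm hv rfl rfl
    have hmapb : ((σ.filter (fun t => p ≤ t)).map (· - p)).map (· + p)
        = σ.filter (fun t => p ≤ t) :=
      map_sub_add (fun t ht => by simpa using (List.mem_filter.1 ht).2)
    have hB1' : Relation.ReflTransGen (SRel WS)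
        (rsP ((((σ.filter (fun t => p ≤ t)).map (· - p)).map (· + p)) ++ σ.filter (· < p)))
        (rsP (v.map (· + p) ++ σ.filter (· < p))) := hB1
    rw [hmapb] at hB1'
    -- lift the A-chain
    have hAn := transfer (S := WS) (S' := WSn p) (D := IsPermWord) (F := normF p)
      (fun x y hS => ⟨hS.1, hS.2.1⟩)
      (fun x y hS => ⟨normF_perm hS.1 p, normF_perm hS.2.1 p, normF_length hS.1 p,
        normF_length hS.2.1 p, normF_weakLe hS.1 hS.2.1 hS.2.2 p⟩)
      (fun x y hx hy hxy => rsP_norm_congr p hx hy hxy) hA ha₀perm hu rfl rfl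
    rw [normF_eq_self ha₀perm ha₀len, normF_eq_self hu hup] at hAn
    have hzge : ∀ t ∈ v.map (· + p), p ≤ t := by
      intro t ht
      obtain ⟨t', _, rfl⟩ := List.mem_map.1 ht
      omega
    have hznd : (v.map (· + p)).Nodup := hv.nodup.map (fun a b hab => by omega)
    have hA1 := transfer (S := WSn p) (S' := WS) (D := fun w => IsPermWord w ∧ w.length = p)
      (F := fun w => v.map (· + p) ++ w)
      (fun x y hS => ⟨⟨hS.1, hS.2.2.1⟩, hS.2.1, hS.2.2.2.1⟩)
      (fun x y hS => by
        obtain ⟨hxp, hyp, hxl, hyl, hw⟩ := hS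
        refine ⟨?_, ?_, ?_⟩
        · have := isPermWord_shiftappend hv hxp hxl
          exact this
        · exact isPermWord_shiftappend hv hyp hyl
        · refine weakLe_append_left hw ?_
          intro t ht
          have h1 : t < p := hxl ▸ hxp.mem_len_iff.1 ht
          exact hyp.mem_len_iff.2 (by omega))
      (fun x y hx hy hxy => rsP_appendleft_congr hzge hznd hx.1 hy.1 hx.2 hxy)
      hAn ⟨ha₀perm, ha₀len⟩ ⟨hu, hup⟩ rfl rfl
    have htri : v.map (· + p) ++ u = triangle v u := by
      unfold triangle; rw [hup]
    have hA1' : Relation.ReflTransGen (SRel WS)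
        (rsP (v.map (· + p) ++ σ.filter (· < p))) (rsP (v.map (· + p) ++ u)) := hA1
    rw [htri] at hA1'
    exact Relation.ReflTransGen.head hstep0 (hB1'.trans hA1')
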